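/- arXiv:2406.09955 — 4 statements merged into one kernel-verified Lean document; each statement's English description precedes it below -/
import Mathlib

section
/- A semigroup (T_t)_{t≥0} of sublinear transition operators is uniformly continuous if and only if there exists a bounded sublinear rate operator Q such that for every t ≥ 0 the sequence ((I + (t/n)Q)^n)_{n∈ℕ} converges in operator seminorm to T_t. -/
open Filter Topology BoundedContinuousFunction ENNReal NNReal

/-- The space of (possibly nonlinear) operators on the Banach space `X →ᵇ ℝ`
of bounded (continuous, i.e. with `X` discrete: all) real-valued functions. -/
abbrev Op (X : Type*) [TopologicalSpace X] :=
  BoundedContinuousFunction X ℝ → BoundedContinuousFunction X ℝ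

/-- The operator seminorm `‖A‖ = sup {‖A f‖/‖f‖ : f ≠ 0}`, a value in `[0,∞]`. -/
noncomputable def opSemiNorm {X : Type*} [TopologicalSpace X] (A : Op X) : ℝ≥0∞ :=
  ⨆ (f : BoundedContinuousFunction X ℝ) (_ : f ≠ 0), (‖A f‖₊ : ℝ≥0∞) / (‖f‖₊ : ℝ≥0∞)

/-- The operator norm distance `d(A,B) = ‖A 0 − B 0‖∞ + ‖A − B‖`. -/
noncomputable def opDist {X : Type*} [TopologicalSpace X] (A B : Op X) : ℝ≥0∞ :=
  (‖A 0 - B 0‖₊ : ℝ≥0∞) + opSemiNorm (A - B)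

/-- Sublinear transition operator: (T1) positive homogeneity, (T2) subadditivity,
(T3) `T f ≤ sup f` pointwise. -/
def IsSublinearTransition {X : Type*} [TopologicalSpace X] (T : Op X) : Prop :=
  (∀ (c : ℝ), 0 ≤ c → ∀ f, T (c • f) = c • T f) ∧
  (∀ f g, ∀ x, T (f + g) x ≤ T f x + T g x) ∧
  (∀ f, ∀ x, T f x ≤ ⨆ y, f y)

/-- Sublinear rate operator: (Q1) positive homogeneity, (Q2) subadditivity,
(Q3) constants map to zero, (Q4) positive maximum principle. -/
def IsSublinearRate {X : Type*} [TopologicalSpace X] (Q : Op X) : Prop :=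
  (∀ (c : ℝ), 0 ≤ c → ∀ f, Q (c • f) = c • Q f) ∧
  (∀ f g, ∀ x, Q (f + g) x ≤ Q f x + Q g x) ∧
  (∀ (c : ℝ), Q (BoundedContinuousFunction.const X c) = 0) ∧
  (∀ f, ∀ x : X, (⨆ y, f y) = f x → 0 ≤ f x → Q f x ≤ 0)

/-- The Euler approximation `(I + (t/n) Q)^n` (n-fold composition). -/
noncomputable def euler {X : Type*} [TopologicalSpace X] (Q : Op X) (t : ℝ) (n : ℕ) : Op X :=
  (fun f => f + (t / (n : ℝ)) • Q f)^[n]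

/-- Uniform continuity of a semigroup `(S_t)_{t ≥ 0}`:
`‖S_s − S_t‖ → 0` as `s → t` (within `s ≥ 0`), for every `t ≥ 0`. -/
def IsUniformlyContinuousSG {X : Type*} [TopologicalSpace X] (S : ℝ → Op X) : Prop :=
  ∀ t : ℝ, 0 ≤ t →
    Tendsto (fun s => opSemiNorm (S s - S t)) (nhdsWithin t (Set.Ici 0)) (nhds 0)

/-- The indicator function `1_x` of the singleton `{x}`. -/
noncomputable def indic {X : Type*} [TopologicalSpace X] [DiscreteTopology X] (x : X) :
    BoundedContinuousFunction X ℝ :=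
  BoundedContinuousFunction.ofNormedAddCommGroup
    (Set.indicator {x} (fun _ => (1 : ℝ))) continuous_of_discreteTopology 1
    (by
      intro y
      classical
      rw [Set.indicator_apply]
      split_ifs <;> simp)

/-- Downward continuity (continuity from above) of an operator. -/
def DownwardContinuous {X : Type*} [TopologicalSpace X] (A : Op X) : Prop :=
  ∀ (f : ℕ → BoundedContinuousFunction X ℝ) (g : BoundedContinuousFunction X ℝ),
    (∀ n x, f (n + 1) x ≤ f n x) →
    (∀ x, Tendsto (fun n => f n x) atTop (nhds (g x))) →
    ∀ x, Tendsto (fun n => A (f n) x) atTop (nhds (A g x))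

section Helpers
variable {X : Type*} [TopologicalSpace X]

lemma opSemiNorm_le_ofReal {A : Op X} {C : ℝ} (hC : 0 ≤ C)
    (h : ∀ f, ‖A f‖ ≤ C * ‖f‖) : opSemiNorm A ≤ ENNReal.ofReal C := by
  refine iSup₂_le fun f hf => ?_
  have h1 : (‖f‖₊ : ℝ≥0∞) ≠ 0 := by simpa using hf
  rw [ENNReal.div_le_iff h1 (by simp)]
  rw [← enorm_eq_nnnorm, ← enorm_eq_nnnorm, ← ofReal_norm, ← ofReal_norm, ← ENNReal.ofReal_mul hC]
  exact ENNReal.ofReal_le_ofReal (h f)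

lemma norm_le_of_opSemiNorm_le {A : Op X} (h0 : A 0 = 0) {C : ℝ≥0∞} (hC : C ≠ ⊤)
    (h : opSemiNorm A ≤ C) : ∀ f, ‖A f‖ ≤ C.toReal * ‖f‖ := by
  intro f
  by_cases hf : f = 0
  · subst hf; simp [h0]
  · have h2 := le_trans (le_iSup₂ (f := fun (f : BoundedContinuousFunction X ℝ) (_ : f ≠ 0) =>
      (‖A f‖₊ : ℝ≥0∞) / (‖f‖₊ : ℝ≥0∞)) f hf) h
    have h1 : (‖f‖₊ : ℝ≥0∞) ≠ 0 := by simpa using hf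
    rw [ENNReal.div_le_iff h1 (by simp)] at h2
    have h3 : (‖A f‖₊ : ℝ≥0∞) ≤ ENNReal.ofReal (C.toReal * ‖f‖) := by
      rw [ENNReal.ofReal_mul ENNReal.toReal_nonneg, ENNReal.ofReal_toReal hC,
        ofReal_norm, enorm_eq_nnnorm]
      exact h2
    rw [← enorm_eq_nnnorm, ← ofReal_norm] at h3
    exact (ENNReal.ofReal_le_ofReal_iff (by positivity)).1 h3

lemma opSemiNorm_sub_comm (A B : Op X) : opSemiNorm (A - B) = opSemiNorm (B - A) := by
  unfold opSemiNorm
  exact iSup_congr fun f => iSup_congr fun _ => by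
    rw [Pi.sub_apply, Pi.sub_apply, show ‖A f - B f‖₊ = ‖B f - A f‖₊ from by
      rw [← neg_sub, nnnorm_neg]]

lemma tendsto_opSemiNorm_zero {ι : Type*} {l : Filter ι} {A : ι → Op X} {c : ι → ℝ}
    (hb : ∀ᶠ i in l, ∀ f, ‖A i f‖ ≤ c i * ‖f‖) (hc : Tendsto c l (𝓝 0))
    (hc0 : ∀ᶠ i in l, 0 ≤ c i) :
    Tendsto (fun i => opSemiNorm (A i)) l (𝓝 0) := by
  have hof : Tendsto (fun i => ENNReal.ofReal (c i)) l (𝓝 0) := by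
    have := (ENNReal.continuous_ofReal.tendsto 0).comp hc
    simpa [Function.comp_def] using this
  refine tendsto_of_tendsto_of_tendsto_of_le_of_le' tendsto_const_nhds hof
    (Eventually.of_forall fun i => zero_le) ?_
  filter_upwards [hb, hc0] with i hi hi0
  exact opSemiNorm_le_ofReal hi0 hi

lemma eventually_norm_le_of_tendsto {ι : Type*} {l : Filter ι} {A : ι → Op X}
    (h0 : ∀ i, A i 0 = 0)
    (h : Tendsto (fun i => opSemiNorm (A i)) l (𝓝 0)) {ε : ℝ} (hε : 0 < ε) :
    ∀ᶠ i in l, ∀ f, ‖A i f‖ ≤ ε * ‖f‖ := by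
  have h2 := (ENNReal.tendsto_nhds_zero.1 h) (ENNReal.ofReal ε) (by simpa using hε)
  filter_upwards [h2] with i hi f
  have h3 := norm_le_of_opSemiNorm_le (h0 i) ofReal_ne_top hi f
  rwa [ENNReal.toReal_ofReal hε.le] at h3

end Helpers

-- standalone real-number lemmas for the bootstrap
lemma boot_key {x : ℝ} (hx0 : 0 ≤ x) (hx1 : x ≤ 1) : 2/(2-x) ≤ Real.exp x := by
  have h1 : 2/(2-x) ≤ 1 + x := by
    rw [div_le_iff₀ (by linarith : (0:ℝ) < 2 - x)]
    nlinarith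
  linarith [Real.add_one_le_exp x]

lemma boot_seq :
    ∀ γ : ℕ → ℝ, γ 0 = 1/2 →
    (∀ n, γ (n+1) = γ n / (2 - (1/2)*(2/3:ℝ)^(n+1))) →
    ∀ n, γ n ≤ 2/2^n := by
  intro γ hγ0 hγs
  have hβ : ∀ n : ℕ, 0 ≤ (1/2)*(2/3:ℝ)^(n+1) ∧ (1/2)*(2/3:ℝ)^(n+1) ≤ 1/2 := by
    intro n
    constructor
    · positivity
    · nlinarith [pow_le_one₀ (by norm_num : (0:ℝ) ≤ 2/3) (by norm_num : (2/3:ℝ) ≤ 1) (n := n+1)]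
  have hγpos : ∀ n, 0 ≤ γ n := by
    intro n
    induction n with
    | zero => rw [hγ0]; norm_num
    | succ n ih =>
      rw [hγs n]
      have hd : (0:ℝ) < 2 - (1/2)*(2/3:ℝ)^(n+1) := by linarith [(hβ n).2]
      exact div_nonneg ih hd.le
  have P3 : ∀ n, (2:ℝ)^n * γ n ≤ (1/2)*Real.exp (1 - (2/3)^n) := by
    intro n
    induction n with
    | zero => simp [hγ0]
    | succ n ih =>
      have hx := hβ n
      have e1 : (2:ℝ)^(n+1) * γ (n+1) = ((2:ℝ)^n * γ n) * (2/(2 - (1/2)*(2/3:ℝ)^(n+1))) := by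
        rw [hγs n]
        field_simp
        ring
      rw [e1]
      have hkey := boot_key hx.1 (by linarith [hx.2])
      have h2 : ((2:ℝ)^n * γ n) * (2/(2 - (1/2)*(2/3:ℝ)^(n+1)))
          ≤ ((1/2)*Real.exp (1 - (2/3)^n)) * Real.exp ((1/2)*(2/3:ℝ)^(n+1)) := by
        have hd : (0:ℝ) < 2 - (1/2)*(2/3:ℝ)^(n+1) := by linarith [(hβ n).2]
        exact mul_le_mul ih hkey (div_nonneg (by norm_num) hd.le) (by positivity)
      refine h2.trans (le_of_eq ?_)
      rw [mul_assoc, ← Real.exp_add]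
      congr 1
      rw [show ((2:ℝ)/3)^(n+1) = (2/3)*(2/3)^n from pow_succ' (2/3:ℝ) n]
      ring
  intro n
  have h3 := P3 n
  have h4 : Real.exp (1 - (2/3:ℝ)^n) ≤ 3 := by
    have h5 : Real.exp (1 - (2/3:ℝ)^n) ≤ Real.exp 1 := by
      apply Real.exp_le_exp.2
      have : (0:ℝ) ≤ (2/3:ℝ)^n := by positivity
      linarith
    have := Real.exp_one_lt_d9
    linarith
  have h6 : (0:ℝ) < 2^n := by positivity
  rw [le_div_iff₀ h6, mul_comm]
  nlinarith

section Trans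
variable {X : Type*} [TopologicalSpace X] {S : Op X} (hS : IsSublinearTransition S)
include hS

lemma trans_zero : S 0 = 0 := by
  have h := hS.1 0 le_rfl 0
  simpa [zero_smul] using h

lemma trans_sup_le [Nonempty X] (f : BoundedContinuousFunction X ℝ) (x : X) : S f x ≤ ‖f‖ :=
  (hS.2.2 f x).trans (ciSup_le fun y => (le_abs_self _).trans
    (by simpa [Real.norm_eq_abs] using f.norm_coe_le_norm y))

lemma trans_norm_le [Nonempty X] (f : BoundedContinuousFunction X ℝ) : ‖S f‖ ≤ ‖f‖ := by
  rw [BoundedContinuousFunction.norm_le (norm_nonneg f)]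
  intro x
  rw [Real.norm_eq_abs, abs_le]
  constructor
  · have h1 := hS.2.1 f (-f) x
    have h2 : f + -f = 0 := by abel
    rw [h2] at h1
    have h3 : S (0 : BoundedContinuousFunction X ℝ) x = 0 := by rw [trans_zero hS]; simp
    have h4 := trans_sup_le hS (-f) x
    rw [norm_neg] at h4
    linarith
  · exact trans_sup_le hS f x

lemma trans_lip [Nonempty X] (f g : BoundedContinuousFunction X ℝ) :
    ‖S f - S g‖ ≤ ‖f - g‖ := by
  rw [BoundedContinuousFunction.norm_le (norm_nonneg _)]
  intro x
  rw [Real.norm_eq_abs, abs_le]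
  have e1 : ∀ u v : BoundedContinuousFunction X ℝ, S u x - S v x ≤ ‖u - v‖ := by
    intro u v
    have h1 := hS.2.1 v (u - v) x
    have h2 : v + (u - v) = u := by abel
    rw [h2] at h1
    have h3 := trans_sup_le hS (u - v) x
    linarith
  simp only [BoundedContinuousFunction.coe_sub, Pi.sub_apply]
  constructor
  · have := e1 g f
    rw [norm_sub_rev] at this
    linarith
  · exact e1 f g

lemma trans_key [Nonempty X] (f u : BoundedContinuousFunction X ℝ) {a : ℝ}
    (hu : ‖S u - u‖ ≤ a) (hu' : ‖S (-u) - (-u)‖ ≤ a) :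
    ‖S (f + u) - S f - u‖ ≤ a := by
  have ha : 0 ≤ a := le_trans (norm_nonneg _) hu
  have habs : ∀ (w : BoundedContinuousFunction X ℝ), ‖S w - w‖ ≤ a →
      ∀ y, |S w y - w y| ≤ a := by
    intro w hw y
    have h5 := (BoundedContinuousFunction.norm_le ha).1 hw y
    simpa [Real.norm_eq_abs] using h5
  rw [BoundedContinuousFunction.norm_le ha]
  intro x
  rw [Real.norm_eq_abs]
  have hu1 := abs_le.1 (habs u hu x)
  have hu2 := abs_le.1 (habs (-u) hu' x)
  have h1 := hS.2.1 (f + u) (-u) x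
  have h2 : f + u + -u = f := by abel
  rw [h2] at h1
  have h4 := hS.2.1 f u x
  simp only [BoundedContinuousFunction.coe_sub, Pi.sub_apply, BoundedContinuousFunction.coe_neg,
    Pi.neg_apply, BoundedContinuousFunction.coe_add, Pi.add_apply] at hu1 hu2 h1 h4 ⊢
  rw [abs_le]
  constructor <;> linarith

lemma trans_const [Nonempty X] (c : ℝ) :
    S (BoundedContinuousFunction.const X c) = BoundedContinuousFunction.const X c := by
  ext x
  have hsup : ∀ d : ℝ, (⨆ y : X, (BoundedContinuousFunction.const X d) y) = d := by
    intro d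
    simp [ciSup_const]
  apply le_antisymm
  · have := hS.2.2 (BoundedContinuousFunction.const X c) x
    rwa [hsup c] at this
  · have h1 := hS.2.1 (BoundedContinuousFunction.const X c)
      (BoundedContinuousFunction.const X (-c)) x
    have h2 : (BoundedContinuousFunction.const X c) + (BoundedContinuousFunction.const X (-c))
        = (0 : BoundedContinuousFunction X ℝ) := by
      ext y; simp
    rw [h2] at h1
    have h3 : S (0 : BoundedContinuousFunction X ℝ) x = 0 := by rw [trans_zero hS]; simp
    have h4 := hS.2.2 (BoundedContinuousFunction.const X (-c)) x
    rw [hsup (-c)] at h4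
    simp only [BoundedContinuousFunction.const_apply] at *
    linarith

end Trans


section SG
variable {X : Type*} [TopologicalSpace X] [Nonempty X]
  {T : ℝ → Op X}
  (hT : ∀ t : ℝ, 0 ≤ t → IsSublinearTransition (T t))
  (hT0 : T 0 = id)
  (hTsg : ∀ s t : ℝ, 0 ≤ s → 0 ≤ t → T (s + t) = T s ∘ T t)
include hT hT0 hTsg

omit [Nonempty X] hT in
lemma sg_iterate {h : ℝ} (hh : 0 ≤ h) (n : ℕ) (f : X →ᵇ ℝ) :
    T ((n : ℝ) * h) f = (T h)^[n] f := by
  induction n with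
  | zero => simp [hT0]
  | succ n ih =>
    have e1 : ((n + 1 : ℕ) : ℝ) * h = h + (n : ℝ) * h := by push_cast; ring
    rw [e1, hTsg h ((n : ℝ) * h) hh (by positivity), Function.comp_apply, ih,
      Function.iterate_succ_apply']

omit hT0 in
lemma halve {h ε ε₂ : ℝ} (hh : 0 ≤ h) (hε0 : 0 ≤ ε) (hε1 : ε ≤ 1)
    (hb : ∀ f, ‖T h f - f‖ ≤ ε * ‖f‖) (hb2 : ∀ f, ‖T (2*h) f - f‖ ≤ ε₂ * ‖f‖) :
    ∀ f, ‖T h f - f‖ ≤ (ε₂/(2-ε)) * ‖f‖ := by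
  intro f
  set g := T h f - f with hg
  have e2 : f + g = T h f := by rw [hg]; abel
  have e : T (2*h) f = T h (f + g) := by
    rw [show (2:ℝ)*h = h + h by ring, hTsg h h hh hh, Function.comp_apply, e2]
  have e3 : T (2*h) f - f - (2:ℝ)•g = T h (f + g) - T h f - g := by
    rw [e, ← e2]; module
  have hu' : ‖T h (-g) - (-g)‖ ≤ ε * ‖g‖ := by
    have h6 := hb (-g); rwa [norm_neg] at h6
  have hkey : ‖T (2*h) f - f - (2:ℝ)•g‖ ≤ ε * ‖g‖ := by
    rw [e3]; exact trans_key (hT h hh) f g (hb g) hu'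
  have h7 := norm_sub_le (T (2*h) f - f) (T (2*h) f - f - (2:ℝ)•g)
  rw [show (T (2*h) f - f) - (T (2*h) f - f - (2:ℝ)•g) = (2:ℝ)•g from by module] at h7
  have h8 : ‖(2:ℝ)•g‖ = 2*‖g‖ := by
    rw [norm_smul (2:ℝ) g]; norm_num
  have h9 := hb2 f
  have h10 : (2-ε) * ‖g‖ ≤ ε₂ * ‖f‖ := by nlinarith [norm_nonneg g]
  rw [div_mul_eq_mul_div, le_div_iff₀ (by linarith : (0:ℝ) < 2 - ε)]
  nlinarith [norm_nonneg g]

omit hT0 in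
lemma kstep {h ε : ℝ} (hh : 0 ≤ h) (hε0 : 0 ≤ ε)
    (hb : ∀ f, ‖T h f - f‖ ≤ ε * ‖f‖) (hT0 : T 0 = id) (k : ℕ) (f : X →ᵇ ℝ) :
    ‖T ((k:ℝ)*h) f - f‖ ≤ (k:ℝ)*ε*‖f‖ ∧
    ‖T ((k:ℝ)*h) f - f - (k:ℝ)•(T h f - f)‖ ≤ ε^2*((k:ℝ)^2/2)*‖f‖ := by
  induction k with
  | zero => simp [hT0]
  | succ k ih =>
    obtain ⟨iha, ihb⟩ := ih
    set D := T ((k:ℝ)*h) f - f with hD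
    set g := T h f - f with hg
    have e2 : f + D = T ((k:ℝ)*h) f := by rw [hD]; abel
    have eT : T (((k+1:ℕ) : ℝ)*h) f = T h (f + D) := by
      have e1 : ((k + 1 : ℕ) : ℝ) * h = h + (k : ℝ) * h := by push_cast; ring
      rw [e1, hTsg h ((k : ℝ) * h) hh (by positivity), Function.comp_apply, e2]
    have hu' : ‖T h (-D) - (-D)‖ ≤ ε * ‖D‖ := by
      have h6 := hb (-D); rwa [norm_neg] at h6
    have hkey : ‖T h (f + D) - T h f - D‖ ≤ ε * ‖D‖ :=
      trans_key (hT h hh) f D (hb D) hu'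
    have hcon : ‖T ((k:ℝ)*h) f‖ ≤ ‖f‖ := trans_norm_le (hT _ (by positivity)) f
    have hstep : ‖T (((k+1:ℕ) : ℝ)*h) f - f - D‖ ≤ ε * ‖f‖ := by
      have e5 : T (((k+1:ℕ) : ℝ)*h) f - f - D = T h (T ((k:ℝ)*h) f) - T ((k:ℝ)*h) f := by
        rw [eT, e2, hD]; abel
      rw [e5]
      exact (hb _).trans (by nlinarith)
    constructor
    · have h11 := norm_add_le (T (((k+1:ℕ) : ℝ)*h) f - f - D) D
      rw [show (T (((k+1:ℕ) : ℝ)*h) f - f - D) + D = T (((k+1:ℕ) : ℝ)*h) f - f from by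
        abel] at h11
      push_cast at iha hstep h11 ⊢
      nlinarith [norm_nonneg f]
    · have e7 : T (((k+1:ℕ) : ℝ)*h) f - f - ((k+1:ℕ):ℝ)•g
          = (T h (f + D) - T h f - D) + (D - (k:ℝ)•g) := by
        rw [eT, hg, hD]
        push_cast
        module
      rw [e7]
      have h12 := norm_add_le (T h (f + D) - T h f - D) (D - (k:ℝ)•g)
      have hDn : ‖D‖ ≤ (k:ℝ)*ε*‖f‖ := iha
      have h13 : ε*‖D‖ ≤ ε*((k:ℝ)*ε*‖f‖) := mul_le_mul_of_nonneg_left hDn hε0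
      push_cast
      nlinarith [norm_nonneg f, sq_nonneg ε, mul_nonneg (mul_nonneg hε0 hε0) (norm_nonneg f)]


omit hT0 in
lemma bootstrap {δ : ℝ} (hδ : 0 < δ)
    (hb : ∀ h, 0 ≤ h → h ≤ δ → ∀ f, ‖T h f - f‖ ≤ (1/2) * ‖f‖) :
    ∀ h, 0 < h → h ≤ δ → ∀ f, ‖T h f - f‖ ≤ ((4/δ)*h) * ‖f‖ := by
  classical
  set β : ℕ → ℝ := fun n => (1/2)*(2/3)^n with hβdef
  let γ : ℕ → ℝ := fun n => Nat.rec (1/2) (fun n ih => ih/(2 - β (n+1))) n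
  have hγ0 : γ 0 = 1/2 := rfl
  have hγs : ∀ n, γ (n+1) = γ n / (2 - (1/2)*(2/3:ℝ)^(n+1)) := fun n => rfl
  have hγle := boot_seq γ hγ0 hγs
  have hβ01 : ∀ n : ℕ, 0 ≤ β n ∧ β n ≤ 1/2 := by
    intro n
    constructor
    · positivity
    · have := pow_le_one₀ (by norm_num : (0:ℝ) ≤ 2/3) (by norm_num : (2/3:ℝ) ≤ 1) (n := n)
      rw [hβdef]
      nlinarith
  have P1 : ∀ h₀, 0 < h₀ → h₀ ≤ δ → ∀ n, ∀ f, ‖T (h₀/2^n) f - f‖ ≤ β n * ‖f‖ := by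
    intro h₀ h0 hle n
    induction n with
    | zero =>
      intro f
      simpa [hβdef] using hb h₀ h0.le (by simpa using hle) f
    | succ n ih =>
      have hhn : (0:ℝ) < h₀/2^(n+1) := by positivity
      have hhnδ : h₀/2^(n+1) ≤ δ := by
        refine le_trans ?_ hle
        rw [div_le_iff₀ (by positivity : (0:ℝ) < 2^(n+1))]
        nlinarith [one_le_pow₀ (by norm_num : (1:ℝ) ≤ 2) (n := n+1), h0.le]
      have hbh := hb _ hhn.le hhnδ
      have hb2 : ∀ f, ‖T (2*(h₀/2^(n+1))) f - f‖ ≤ β n * ‖f‖ := by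
        intro f
        have e : 2*(h₀/2^(n+1)) = h₀/2^n := by
          rw [pow_succ]; field_simp
        rw [e]; exact ih f
      have h2 := halve hT hTsg hhn.le (by norm_num) (by norm_num) hbh hb2
      intro f
      have h3 := h2 f
      have e2 : β n/(2-(1/2:ℝ)) = β (n+1) := by
        rw [hβdef]; simp only; rw [pow_succ]; ring
      rwa [e2] at h3
  have P2 : ∀ h₀, 0 < h₀ → h₀ ≤ δ → ∀ n, ∀ f, ‖T (h₀/2^n) f - f‖ ≤ γ n * ‖f‖ := by
    intro h₀ h0 hle n
    induction n with
    | zero =>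
      intro f
      simpa [hγ0] using hb h₀ h0.le (by simpa using hle) f
    | succ n ih =>
      have hhn : (0:ℝ) < h₀/2^(n+1) := by positivity
      have hhnδ : h₀/2^(n+1) ≤ δ := by
        refine le_trans ?_ hle
        rw [div_le_iff₀ (by positivity : (0:ℝ) < 2^(n+1))]
        nlinarith [one_le_pow₀ (by norm_num : (1:ℝ) ≤ 2) (n := n+1), h0.le]
      have hbh := P1 h₀ h0 hle (n+1)
      have hb2 : ∀ f, ‖T (2*(h₀/2^(n+1))) f - f‖ ≤ γ n * ‖f‖ := by
        intro f
        have e : 2*(h₀/2^(n+1)) = h₀/2^n := by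
          rw [pow_succ]; field_simp
        rw [e]; exact ih f
      have h2 := halve hT hTsg hhn.le (hβ01 (n+1)).1 (by linarith [(hβ01 (n+1)).2]) hbh hb2
      intro f
      have h3 := h2 f
      rwa [← hγs n] at h3
  intro h hh0 hhδ f
  have hex : ∃ n:ℕ, δ < h*2^(n+1) := by
    obtain ⟨n, hn⟩ := pow_unbounded_of_one_lt (δ/h) (by norm_num : (1:ℝ) < 2)
    rw [div_lt_iff₀ hh0] at hn
    refine ⟨n, ?_⟩
    have h1 : (2:ℝ)^n ≤ 2^(n+1) := by
      apply pow_le_pow_right₀ (by norm_num) (by omega)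
    calc δ < 2^n * h := hn
      _ = h * 2^n := mul_comm _ _
      _ ≤ h * 2^(n+1) := by nlinarith
  let n := Nat.find hex
  have hn2 : δ < h*2^(n+1) := Nat.find_spec hex
  have hn1 : h*2^n ≤ δ := by
    by_cases hn0 : n = 0
    · rw [hn0]; simpa using hhδ
    · obtain ⟨m, hm⟩ := Nat.exists_eq_succ_of_ne_zero hn0
      have h4 := Nat.find_min hex (show m < n by omega)
      rw [hm]
      exact not_lt.1 h4
  have hp : (0:ℝ) < h*2^n := by positivity
  have h5 := P2 (h*2^n) hp hn1 n f
  rw [show (h*2^n)/2^n = h from by field_simp] at h5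
  have hγn : γ n ≤ (4/δ)*h := by
    have h6 : (0:ℝ) < (2:ℝ)^n := by positivity
    have hle2 := hγle n
    have hd : δ < 2*(h*2^n) := by
      have e : h*2^(n+1) = 2*(h*2^n) := by rw [pow_succ]; ring
      rw [e] at hn2; exact hn2
    have hkey : (2:ℝ)/2^n ≤ 4/δ*h := by
      rw [div_le_iff₀ h6, div_mul_eq_mul_div, div_mul_eq_mul_div, le_div_iff₀ hδ]
      nlinarith
    linarith
  calc ‖T h f - f‖ ≤ γ n * ‖f‖ := h5
    _ ≤ (4/δ)*h*‖f‖ := mul_le_mul_of_nonneg_right hγn (norm_nonneg f)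

lemma hM0ext {δ M : ℝ}
    (hM : ∀ h, 0 < h → h ≤ δ → ∀ f, ‖T h f - f‖ ≤ (M*h) * ‖f‖) :
    ∀ h, 0 ≤ h → h ≤ δ → ∀ f, ‖T h f - f‖ ≤ (M*h) * ‖f‖ := by
  intro h hh0 hhδ f
  rcases eq_or_lt_of_le hh0 with h0 | h0
  · rw [← h0, hT0]
    simp
  · exact hM h h0 hhδ f

omit hT0 in
lemma E1core {δ M s s' : ℝ} (hδ : 0 < δ) (hM0 : 0 ≤ M)
    (hM : ∀ h, 0 ≤ h → h ≤ δ → ∀ f, ‖T h f - f‖ ≤ (M*h) * ‖f‖) (hT0 : T 0 = id)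
    (hs' : 0 < s') (hss : s' ≤ s) (hsδ : s ≤ δ) (f : X →ᵇ ℝ) :
    ‖s⁻¹•(T s f - f) - s'⁻¹•(T s' f - f)‖ ≤ (2*M*s'/s + M^2*s/2)*‖f‖ := by
  have hs : 0 < s := lt_of_lt_of_le hs' hss
  set k : ℕ := ⌊s/s'⌋₊ with hk
  have hk1 : 1 ≤ (k:ℝ) := by
    have : (1:ℕ) ≤ k := Nat.le_floor (by rw [Nat.cast_one, le_div_iff₀ hs']; linarith)
    exact_mod_cast this
  have hks : (k:ℝ)*s' ≤ s := by
    have h1 := Nat.floor_le (le_of_lt (div_pos hs hs'))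
    rw [← hk] at h1
    calc (k:ℝ)*s' ≤ (s/s')*s' := by nlinarith
      _ = s := by field_simp
  have hr : s - (k:ℝ)*s' < s' := by
    have h1 := Nat.lt_floor_add_one (s/s')
    rw [← hk] at h1
    have h2 : s < ((k:ℝ)+1)*s' := by
      calc s = (s/s')*s' := by field_simp
        _ < ((k:ℝ)+1)*s' := by nlinarith
    nlinarith
  set r : ℝ := s - (k:ℝ)*s' with hrdef
  have hr0 : 0 ≤ r := by simp only [hrdef]; nlinarith
  have hks0 : 0 ≤ (k:ℝ)*s' := by positivity
  -- (i)
  have e1 : T s f = T r (T ((k:ℝ)*s') f) := by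
    have := hTsg r ((k:ℝ)*s') hr0 hks0
    rw [show r + (k:ℝ)*s' = s by simp [hrdef]] at this
    rw [this, Function.comp_apply]
  have h1 : ‖T s f - T ((k:ℝ)*s') f‖ ≤ M*s'*‖f‖ := by
    rw [e1]
    have hb := hM r hr0 (by linarith) (T ((k:ℝ)*s') f)
    have hc : ‖T ((k:ℝ)*s') f‖ ≤ ‖f‖ := trans_norm_le (hT _ hks0) f
    have hMr : M*r ≤ M*s' := mul_le_mul_of_nonneg_left (by linarith) hM0
    calc ‖T r (T ((k:ℝ)*s') f) - T ((k:ℝ)*s') f‖ ≤ (M*r)*‖T ((k:ℝ)*s') f‖ := hb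
      _ ≤ (M*s')*‖T ((k:ℝ)*s') f‖ := mul_le_mul_of_nonneg_right hMr (norm_nonneg _)
      _ ≤ M*s'*‖f‖ := mul_le_mul_of_nonneg_left hc (by positivity)
  -- (ii)
  have h2 := (kstep hT hTsg hs'.le (by positivity : (0:ℝ) ≤ M*s')
    (fun g => hM s' hs'.le (by linarith) g) hT0 k f).2
  have h2' : ‖T ((k:ℝ)*s') f - f - (k:ℝ)•(T s' f - f)‖ ≤ M^2*s^2/2*‖f‖ := by
    refine h2.trans ?_
    have h6 : ((k:ℝ)*s')^2 ≤ s^2 := by nlinarith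
    calc (M*s')^2*((k:ℝ)^2/2)*‖f‖ = M^2*((k:ℝ)*s')^2/2*‖f‖ := by ring
      _ ≤ M^2*s^2/2*‖f‖ := by gcongr
  -- combine and scale
  set A := T s f - f with hA
  set B := T s' f - f with hB
  set c : ℝ := (k:ℝ)*s'/s with hc
  have h3 : ‖A - (k:ℝ)•B‖ ≤ (M*s' + M^2*s^2/2)*‖f‖ := by
    have e2 : A - (k:ℝ)•B
        = (T s f - T ((k:ℝ)*s') f) + (T ((k:ℝ)*s') f - f - (k:ℝ)•B) := by
      rw [hA]; abel
    rw [e2]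
    refine (norm_add_le _ _).trans ?_
    linarith [h1, h2']
  have hBn : ‖s'⁻¹•B‖ ≤ M*‖f‖ := by
    rw [norm_smul s'⁻¹ B, Real.norm_eq_abs, abs_of_pos (inv_pos.2 hs')]
    have h9 := hM s' hs'.le (by linarith) f
    calc s'⁻¹ * ‖B‖ ≤ s'⁻¹*((M*s')*‖f‖) :=
          mul_le_mul_of_nonneg_left h9 (by positivity)
      _ = M*‖f‖ := by
          rw [show s'⁻¹*((M*s')*‖f‖) = (s'⁻¹*s')*(M*‖f‖) from by ring,
            inv_mul_cancel₀ (ne_of_gt hs'), one_mul]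
  have h4 : ‖s⁻¹•A - c•(s'⁻¹•B)‖ ≤ (M*s'/s + M^2*s/2)*‖f‖ := by
    have e3 : s⁻¹•A - c•(s'⁻¹•B) = s⁻¹•(A - (k:ℝ)•B) := by
      rw [smul_sub s⁻¹ A ((k:ℝ)•B), smul_smul, smul_smul]
      congr 2
      rw [hc]
      field_simp
    rw [e3, norm_smul s⁻¹ (A - (k:ℝ)•B), Real.norm_eq_abs, abs_of_pos (inv_pos.2 hs)]
    calc s⁻¹ * ‖A - (k:ℝ)•B‖ ≤ s⁻¹ * ((M*s' + M^2*s^2/2)*‖f‖) :=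
          mul_le_mul_of_nonneg_left h3 (by positivity)
      _ = (M*s'*s⁻¹ + M^2*(s^2*s⁻¹)/2)*‖f‖ := by ring
      _ = (M*s'/s + M^2*s/2)*‖f‖ := by
          rw [show s^2*s⁻¹ = s from by rw [sq, mul_assoc, mul_inv_cancel₀ (ne_of_gt hs), mul_one],
            div_eq_mul_inv (M*s') s]
  have h5 : ‖c•(s'⁻¹•B) - s'⁻¹•B‖ ≤ (s'/s)*(M*‖f‖) := by
    have e4 : c•(s'⁻¹•B) - s'⁻¹•B = (c - 1)•(s'⁻¹•B) := by
      rw [sub_smul c 1 (s'⁻¹•B), one_smul]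
    rw [e4, norm_smul (c-1) (s'⁻¹•B), Real.norm_eq_abs]
    have h7 : |c - 1| ≤ s'/s := by
      have hc1 : c ≤ 1 := by rw [hc, div_le_one hs]; exact hks
      have hc0 : (0:ℝ) ≤ c := by rw [hc]; positivity
      rw [abs_of_nonpos (by linarith), neg_sub, hc, one_sub_div (ne_of_gt hs)]
      gcongr
    exact mul_le_mul h7 hBn (norm_nonneg _) (by positivity)
  have e5 : s⁻¹•A - s'⁻¹•B = (s⁻¹•A - c•(s'⁻¹•B)) + (c•(s'⁻¹•B) - s'⁻¹•B) := by abel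
  calc ‖s⁻¹•A - s'⁻¹•B‖
      ≤ ‖s⁻¹•A - c•(s'⁻¹•B)‖ + ‖c•(s'⁻¹•B) - s'⁻¹•B‖ := e5 ▸ norm_add_le _ _
    _ ≤ (M*s'/s + M^2*s/2)*‖f‖ + (s'/s)*(M*‖f‖) := add_le_add h4 h5
    _ = (2*M*s'/s + M^2*s/2)*‖f‖ := by ring

lemma exists_gen {δ M : ℝ} (hδ : 0 < δ) (hM0 : 0 ≤ M)
    (hM : ∀ h, 0 ≤ h → h ≤ δ → ∀ f, ‖T h f - f‖ ≤ (M*h) * ‖f‖) :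
    ∃ Q : Op X,
      (∀ f, Tendsto (fun m : ℕ => (δ/((m:ℝ)+1))⁻¹•(T (δ/((m:ℝ)+1)) f - f)) atTop (𝓝 (Q f))) ∧
      (∀ s, 0 < s → s ≤ δ → ∀ f, ‖s⁻¹•(T s f - f) - Q f‖ ≤ (M^2*s/2)*‖f‖) := by
  set u : ℕ → (X →ᵇ ℝ) → (X →ᵇ ℝ) :=
    fun m f => (δ/((m:ℝ)+1))⁻¹•(T (δ/((m:ℝ)+1)) f - f) with hu
  have htend0 : Tendsto (fun m:ℕ => δ/((m:ℝ)+1)) atTop (𝓝 0) := by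
    simpa [div_eq_mul_inv] using tendsto_one_div_add_atTop_nhds_zero_nat.const_mul δ
  have hsm : ∀ m:ℕ, 0 < δ/((m:ℝ)+1) := fun m => div_pos hδ (by positivity)
  have hsδ : ∀ m:ℕ, δ/((m:ℝ)+1) ≤ δ := fun m => by
    rw [div_le_iff₀ (by positivity)]
    nlinarith [mul_nonneg hδ.le (Nat.cast_nonneg (α := ℝ) m)]
  have hmono : ∀ k m : ℕ, k ≤ m → δ/((m:ℝ)+1) ≤ δ/((k:ℝ)+1) := by
    intro k m hkm
    have h1 : ((k:ℝ)+1) ≤ ((m:ℝ)+1) := by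
      have := Nat.cast_le (α := ℝ).2 hkm
      linarith
    exact div_le_div_of_nonneg_left hδ.le (by positivity) h1
  have hE : ∀ (k m : ℕ), k ≤ m → ∀ f, ‖u k f - u m f‖
      ≤ (2*M*(δ/((m:ℝ)+1))/(δ/((k:ℝ)+1)) + M^2*(δ/((k:ℝ)+1))/2)*‖f‖ :=
    fun k m hkm f => E1core hT hTsg hδ hM0 hM hT0 (hsm m) (hmono k m hkm) (hsδ k) f
  have hdist : ∀ (k l : ℕ) (f : X →ᵇ ℝ), ‖u k f - u l f‖
      ≤ (M^2*(δ/((k:ℝ)+1))/2 + M^2*(δ/((l:ℝ)+1))/2)*‖f‖ := by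
    intro k l f
    set sk := δ/((k:ℝ)+1)
    set sl := δ/((l:ℝ)+1)
    have hlim : Tendsto (fun m : ℕ =>
        ((2*M/sk + 2*M/sl)*‖f‖)*(δ/((m:ℝ)+1)) + (M^2*sk/2 + M^2*sl/2)*‖f‖) atTop
        (𝓝 ((M^2*sk/2 + M^2*sl/2)*‖f‖)) := by
      have h2 := (htend0.const_mul ((2*M/sk + 2*M/sl)*‖f‖)).add_const
        ((M^2*sk/2 + M^2*sl/2)*‖f‖)
      simpa using h2
    refine ge_of_tendsto hlim ?_
    filter_upwards [eventually_ge_atTop k, eventually_ge_atTop l] with m hmk hml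
    have e1 : u k f - u l f = (u k f - u m f) + (u m f - u l f) := by abel
    have h3 := hE k m hmk f
    have h4 : ‖u m f - u l f‖ ≤ (2*M*(δ/((m:ℝ)+1))/sl + M^2*sl/2)*‖f‖ := by
      have := hE l m hml f
      rwa [show u l f - u m f = -(u m f - u l f) from by abel, norm_neg] at this
    calc ‖u k f - u l f‖ ≤ ‖u k f - u m f‖ + ‖u m f - u l f‖ := e1 ▸ norm_add_le _ _
      _ ≤ (2*M*(δ/((m:ℝ)+1))/sk + M^2*sk/2)*‖f‖ + (2*M*(δ/((m:ℝ)+1))/sl + M^2*sl/2)*‖f‖ :=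
          add_le_add h3 h4
      _ = ((2*M/sk + 2*M/sl)*‖f‖)*(δ/((m:ℝ)+1)) + (M^2*sk/2 + M^2*sl/2)*‖f‖ := by ring
  have hcauchy : ∀ f : X →ᵇ ℝ, CauchySeq (fun m => u m f) := by
    intro f
    apply cauchySeq_of_le_tendsto_0 (fun N : ℕ => M^2*(δ/((N:ℝ)+1))*‖f‖)
    · intro n m N hn hm
      rw [dist_eq_norm]
      refine (hdist n m f).trans ?_
      have h1 : δ/((n:ℝ)+1) ≤ δ/((N:ℝ)+1) := hmono N n hn
      have h2 : δ/((m:ℝ)+1) ≤ δ/((N:ℝ)+1) := hmono N m hm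
      calc (M^2*(δ/((n:ℝ)+1))/2 + M^2*(δ/((m:ℝ)+1))/2)*‖f‖
          ≤ (M^2*(δ/((N:ℝ)+1))/2 + M^2*(δ/((N:ℝ)+1))/2)*‖f‖ := by gcongr
        _ = M^2*(δ/((N:ℝ)+1))*‖f‖ := by ring
    · have h5 := (htend0.const_mul (M^2)).mul_const ‖f‖
      simpa [mul_assoc] using h5
  choose Q hQ using fun f => cauchySeq_tendsto_of_complete (hcauchy f)
  refine ⟨Q, hQ, ?_⟩
  intro s hs0 hsδ' f
  obtain ⟨m₀, hm₀⟩ : ∃ m₀:ℕ, δ/((m₀:ℝ)+1) ≤ s := by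
    obtain ⟨n, hn⟩ := exists_nat_ge (δ/s)
    refine ⟨n, ?_⟩
    rw [div_le_iff₀ (by positivity)]
    rw [div_le_iff₀ hs0] at hn
    nlinarith
  have hev : ∀ᶠ m in atTop, ‖s⁻¹•(T s f - f) - u m f‖
      ≤ (2*M*(δ/((m:ℝ)+1))/s + M^2*s/2)*‖f‖ := by
    filter_upwards [eventually_ge_atTop m₀] with m hm
    exact E1core hT hTsg hδ hM0 hM hT0 (hsm m) ((hmono m₀ m hm).trans hm₀) hsδ' f
  have hlim1 : Tendsto (fun m => ‖s⁻¹•(T s f - f) - u m f‖) atTop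
      (𝓝 ‖s⁻¹•(T s f - f) - Q f‖) := (tendsto_const_nhds.sub (hQ f)).norm
  have hlim2 : Tendsto (fun m : ℕ => (2*M*(δ/((m:ℝ)+1))/s + M^2*s/2)*‖f‖) atTop
      (𝓝 ((M^2*s/2)*‖f‖)) := by
    have he : ∀ m : ℕ, (2*M*(δ/((m:ℝ)+1))/s + M^2*s/2)*‖f‖
        = (2*M/s*‖f‖)*(δ/((m:ℝ)+1)) + (M^2*s/2)*‖f‖ := by intro m; ring
    simp only [he]
    have h6 := (htend0.const_mul (2*M/s*‖f‖)).add_const ((M^2*s/2)*‖f‖)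
    simpa using h6
  exact le_of_tendsto_of_tendsto hlim1 hlim2 hev

end SG


section Main
variable {X : Type*} [TopologicalSpace X] [Nonempty X]
  {T : ℝ → Op X}
  (hT : ∀ t : ℝ, 0 ≤ t → IsSublinearTransition (T t))
  (hT0 : T 0 = id)
  (hTsg : ∀ s t : ℝ, 0 ≤ s → 0 ≤ t → T (s + t) = T s ∘ T t)
include hT hT0 hTsg

set_option maxHeartbeats 2000000 in
lemma sg_forward (hUC : IsUniformlyContinuousSG T) :
    ∃ Q : Op X, IsSublinearRate Q ∧ opSemiNorm Q ≠ ⊤ ∧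
      ∀ t : ℝ, 0 ≤ t →
        Tendsto (fun n => opSemiNorm (euler Q t n - T t)) atTop (𝓝 0) := by
  classical
  have h0 : Tendsto (fun s => opSemiNorm (T s - T 0)) (𝓝[Set.Ici 0] 0) (𝓝 0) := hUC 0 le_rfl
  have hev : ∀ᶠ s in 𝓝[Set.Ici 0] (0:ℝ), opSemiNorm (T s - T 0) ≤ ENNReal.ofReal (1/2) :=
    (ENNReal.tendsto_nhds_zero.1 h0) _ (by norm_num)
  obtain ⟨δ', hδ'pos, hδ'⟩ := Metric.mem_nhdsWithin_iff.1 (hev.and eventually_mem_nhdsWithin)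
  set δ := δ'/2 with hδdef
  have hδpos : 0 < δ := by positivity
  have hbnd : ∀ h, 0 ≤ h → h ≤ δ → ∀ f, ‖T h f - f‖ ≤ (1/2) * ‖f‖ := by
    intro h hh0 hhδ f
    have hmem : h ∈ Metric.ball (0:ℝ) δ' ∩ Set.Ici 0 := by
      constructor
      · rw [Metric.mem_ball, Real.dist_eq, sub_zero, abs_of_nonneg hh0]; linarith
      · exact hh0
    have h2 := (hδ' hmem).1
    have h3 := norm_le_of_opSemiNorm_le (A := T h - T 0) ?side ofReal_ne_top h2 f
    case side =>
      show (T h - T 0) 0 = 0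
      rw [Pi.sub_apply, trans_zero (hT h hh0), hT0]; simp
    rw [ENNReal.toReal_ofReal (by norm_num)] at h3
    simpa [hT0] using h3
  have hM' := bootstrap hT hTsg hδpos hbnd
  set M := 4/δ with hMdef
  have hM0 : (0:ℝ) ≤ M := by positivity
  have hM : ∀ h, 0 ≤ h → h ≤ δ → ∀ f, ‖T h f - f‖ ≤ (M*h) * ‖f‖ :=
    hM0ext hT hT0 hTsg (fun h hh0 hhδ f => hM' h hh0 hhδ f)
  obtain ⟨Q, hQlim, hQapprox⟩ := exists_gen hT hT0 hTsg hδpos hM0 hM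
  have hpt : ∀ (f : X →ᵇ ℝ) (x : X), Tendsto
      (fun m : ℕ => ((δ/((m:ℝ)+1))⁻¹•(T (δ/((m:ℝ)+1)) f - f)) x) atTop (𝓝 (Q f x)) := by
    intro f x
    exact ((continuous_eval_const x).tendsto (Q f)).comp
      (hQlim f)
  have hsm : ∀ m:ℕ, 0 < δ/((m:ℝ)+1) := fun m => div_pos hδpos (by positivity)
  have hsδ2 : ∀ m:ℕ, δ/((m:ℝ)+1) ≤ δ := fun m => by
    rw [div_le_iff₀ (by positivity)]
    nlinarith [mul_nonneg hδpos.le (Nat.cast_nonneg (α := ℝ) m)]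
  have hQM : ∀ f, ‖Q f‖ ≤ M*‖f‖ := by
    intro f
    refine le_of_tendsto (hQlim f).norm (Eventually.of_forall fun m => ?_)
    set s := δ/((m:ℝ)+1) with hs
    have h4 := hM s (hsm m).le (hsδ2 m) f
    rw [norm_smul s⁻¹ (T s f - f), Real.norm_eq_abs, abs_of_pos (inv_pos.2 (hsm m))]
    calc s⁻¹*‖T s f - f‖ ≤ s⁻¹*((M*s)*‖f‖) := mul_le_mul_of_nonneg_left h4 (by positivity)
      _ = (s⁻¹*s)*(M*‖f‖) := by ring
      _ = M*‖f‖ := by rw [inv_mul_cancel₀ (ne_of_gt (hsm m)), one_mul]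
  have hQhom : ∀ (c:ℝ), 0 ≤ c → ∀ f, Q (c•f) = c•Q f := by
    intro c hc f
    have h5 : ∀ m : ℕ, (δ/((m:ℝ)+1))⁻¹•(T (δ/((m:ℝ)+1)) (c•f) - c•f)
        = c•((δ/((m:ℝ)+1))⁻¹•(T (δ/((m:ℝ)+1)) f - f)) := by
      intro m
      rw [(hT _ (hsm m).le).1 c hc f]
      module
    have h6 := hQlim (c•f)
    simp only [h5] at h6
    exact tendsto_nhds_unique h6 ((hQlim f).const_smul c)
  have hQsub : ∀ f g x, Q (f+g) x ≤ Q f x + Q g x := by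
    intro f g x
    refine le_of_tendsto_of_tendsto (hpt (f+g) x) ((hpt f x).add (hpt g x))
      (Eventually.of_forall fun m => ?_)
    set s := δ/((m:ℝ)+1) with hs
    have h6 := (hT s (hsm m).le).2.1 f g x
    have h7 : (0:ℝ) ≤ s⁻¹ := (inv_pos.2 (hsm m)).le
    simp only [BoundedContinuousFunction.coe_smul, Pi.smul_apply, smul_eq_mul,
      BoundedContinuousFunction.coe_sub, Pi.sub_apply, BoundedContinuousFunction.coe_add,
      Pi.add_apply]
    have h8 : s⁻¹*((T s (f+g)) x - (f x + g x))
        ≤ s⁻¹*(((T s f) x - f x) + ((T s g) x - g x)) := by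
      apply mul_le_mul_of_nonneg_left _ h7
      have h9 : (f+g) x = f x + g x := by simp
      rw [← h9]
      linarith
    nlinarith [h8]
  have hQconst : ∀ c:ℝ, Q (BoundedContinuousFunction.const X c) = 0 := by
    intro c
    have h8 : ∀ m : ℕ, (δ/((m:ℝ)+1))⁻¹•(T (δ/((m:ℝ)+1)) (BoundedContinuousFunction.const X c)
        - BoundedContinuousFunction.const X c) = 0 := by
      intro m
      rw [trans_const (hT _ (hsm m).le) c]
      simp
    have h9 := hQlim (BoundedContinuousFunction.const X c)
    simp only [h8] at h9
    exact tendsto_nhds_unique h9 tendsto_const_nhds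
  have hQ4 : ∀ f (x:X), (⨆ y, f y) = f x → 0 ≤ f x → Q f x ≤ 0 := by
    intro f x hsup hfx
    refine le_of_tendsto (hpt f x) (Eventually.of_forall fun m => ?_)
    set s := δ/((m:ℝ)+1) with hs
    have h6 := (hT s (hsm m).le).2.2 f x
    rw [hsup] at h6
    have h7 : (0:ℝ) ≤ s⁻¹ := (inv_pos.2 (hsm m)).le
    simp only [BoundedContinuousFunction.coe_smul, Pi.smul_apply, smul_eq_mul,
      BoundedContinuousFunction.coe_sub, Pi.sub_apply]
    nlinarith
  have hQ0 : Q 0 = 0 := by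
    have h10 := hQhom 0 le_rfl 0
    rwa [zero_smul, zero_smul] at h10
  have hQlip : ∀ u v : X →ᵇ ℝ, ‖Q u - Q v‖ ≤ M*‖u - v‖ := by
    intro u v
    have hside : ∀ a b : X →ᵇ ℝ, ∀ x, Q a x - Q b x ≤ M*‖a - b‖ := by
      intro a b x
      have h6 := hQsub b (a - b) x
      rw [show b + (a - b) = a from by abel] at h6
      have h7 : Q (a-b) x ≤ M*‖a-b‖ := by
        have h8 := hQM (a-b)
        have h9 := (Q (a-b)).norm_coe_le_norm x
        rw [Real.norm_eq_abs] at h9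
        have h10 := le_abs_self (Q (a-b) x)
        linarith
      linarith
    rw [BoundedContinuousFunction.norm_le (by positivity)]
    intro x
    rw [Real.norm_eq_abs, abs_le]
    simp only [BoundedContinuousFunction.coe_sub, Pi.sub_apply]
    constructor
    · have h11 := hside v u x
      rw [norm_sub_rev] at h11
      linarith
    · exact hside u v x
  have hstep : ∀ h, 0 < h → h ≤ δ → ∀ g : X →ᵇ ℝ,
      ‖(g + h•Q g) - T h g‖ ≤ (M^2*h^2/2)*‖g‖ := by
    intro h hh0 hhδ g
    have h6 := hQapprox h hh0 hhδ g
    have e1 : (g + h•Q g) - T h g = -(h•(h⁻¹•(T h g - g) - Q g)) := by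
      rw [smul_sub h (h⁻¹•(T h g - g)) (Q g), smul_smul, mul_inv_cancel₀ (ne_of_gt hh0),
        one_smul]
      abel
    rw [e1, norm_neg, norm_smul h (h⁻¹•(T h g - g) - Q g), Real.norm_eq_abs, abs_of_pos hh0]
    calc h*‖h⁻¹•(T h g - g) - Q g‖ ≤ h*((M^2*h/2)*‖g‖) :=
          mul_le_mul_of_nonneg_left h6 hh0.le
      _ = (M^2*h^2/2)*‖g‖ := by ring
  have hmain : ∀ t, 0 < t → ∀ n:ℕ, 1 ≤ n → t/(n:ℝ) ≤ δ → ∀ f,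
      ‖euler Q t n f - T t f‖ ≤ (Real.exp (t*M) * (M^2*t^2/2) / (n:ℝ)) * ‖f‖ := by
    intro t ht n hn hδn f
    have hn0 : (0:ℝ) < (n:ℝ) := by
      have : (0:ℕ) < n := hn
      exact_mod_cast this
    set h := t/(n:ℝ) with hh
    have hh0 : 0 < h := div_pos ht hn0
    set E : (X →ᵇ ℝ) → (X →ᵇ ℝ) := fun g => g + h•Q g with hE
    have hElip : ∀ a b, ‖E a - E b‖ ≤ (1+h*M)*‖a - b‖ := by
      intro a b
      have e2 : E a - E b = (a - b) + h•(Q a - Q b) := by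
        simp only [hE]
        rw [smul_sub]
        abel
      rw [e2]
      refine (norm_add_le _ _).trans ?_
      rw [norm_smul h (Q a - Q b), Real.norm_eq_abs, abs_of_pos hh0]
      have h12 := hQlip a b
      nlinarith [norm_nonneg (a-b)]
    have hTnorm : ∀ m:ℕ, ‖(T h)^[m] f‖ ≤ ‖f‖ := by
      intro m
      rw [← sg_iterate hT0 hTsg hh0.le m f]
      exact trans_norm_le (hT _ (by positivity)) f
    have hone : (1:ℝ) ≤ 1 + h*M := by nlinarith
    have hiter : ∀ m:ℕ, ‖E^[m] f - (T h)^[m] f‖ ≤ (m:ℝ)*(1+h*M)^m*(M^2*h^2/2)*‖f‖ := by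
      intro m
      induction m with
      | zero => simp
      | succ m ih =>
        rw [Function.iterate_succ_apply' E m f, Function.iterate_succ_apply' (T h) m f]
        have e3 : E (E^[m] f) - T h ((T h)^[m] f)
            = (E (E^[m] f) - E ((T h)^[m] f)) + (E ((T h)^[m] f) - T h ((T h)^[m] f)) := by
          abel
        rw [e3]
        refine (norm_add_le _ _).trans ?_
        have h7 := hElip (E^[m] f) ((T h)^[m] f)
        have h8 : ‖E ((T h)^[m] f) - T h ((T h)^[m] f)‖ ≤ (M^2*h^2/2)*‖(T h)^[m] f‖ := by
          simp only [hE]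
          exact hstep h hh0 hδn ((T h)^[m] f)
        have h9 := hTnorm m
        have h10 : ‖E ((T h)^[m] f) - T h ((T h)^[m] f)‖ ≤ (M^2*h^2/2)*‖f‖ :=
          h8.trans (mul_le_mul_of_nonneg_left h9 (by positivity))
        have h11 : ‖E (E^[m] f) - E ((T h)^[m] f)‖
            ≤ (1+h*M)*((m:ℝ)*(1+h*M)^m*(M^2*h^2/2)*‖f‖) :=
          h7.trans (mul_le_mul_of_nonneg_left ih (by nlinarith))
        have hpow : (1:ℝ) ≤ (1+h*M)^(m+1) := one_le_pow₀ hone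
        have hpow2 : (1+h*M)^(m+1) = (1+h*M)*(1+h*M)^m := by rw [pow_succ]; ring
        have hC : (0:ℝ) ≤ (M^2*h^2/2)*‖f‖ := by positivity
        have h17 : (M^2*h^2/2)*‖f‖ ≤ (1+h*M)^(m+1)*((M^2*h^2/2)*‖f‖) :=
          le_mul_of_one_le_left hC hpow
        push_cast
        calc ‖E (E^[m] f) - E ((T h)^[m] f)‖ + ‖E ((T h)^[m] f) - T h ((T h)^[m] f)‖
            ≤ (1+h*M)*((m:ℝ)*(1+h*M)^m*(M^2*h^2/2)*‖f‖) + (M^2*h^2/2)*‖f‖ :=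
              add_le_add h11 h10
          _ ≤ (1+h*M)*((m:ℝ)*(1+h*M)^m*(M^2*h^2/2)*‖f‖)
              + (1+h*M)^(m+1)*((M^2*h^2/2)*‖f‖) := by linarith
          _ = ((m:ℝ)+1)*(1+h*M)^(m+1)*(M^2*h^2/2)*‖f‖ := by rw [hpow2]; ring
    have h12 := hiter n
    have e4 : (T h)^[n] f = T t f := by
      rw [← sg_iterate hT0 hTsg hh0.le n f, hh]
      congr 1
      field_simp
    have e5 : euler Q t n f = E^[n] f := by
      unfold euler
      rw [hE, hh]
    calc ‖euler Q t n f - T t f‖ = ‖E^[n] f - (T h)^[n] f‖ := by rw [e5, e4]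
      _ ≤ (n:ℝ)*(1+h*M)^n*(M^2*h^2/2)*‖f‖ := h12
      _ ≤ (Real.exp (t*M) * (M^2*t^2/2) / (n:ℝ)) * ‖f‖ := by
        have hexp : (1+h*M)^n ≤ Real.exp (t*M) := by
          have h13 : 1+h*M ≤ Real.exp (h*M) := by linarith [Real.add_one_le_exp (h*M)]
          calc (1+h*M)^n ≤ (Real.exp (h*M))^n := pow_le_pow_left₀ (by nlinarith) h13 n
            _ = Real.exp ((n:ℝ)*(h*M)) := by rw [← Real.exp_nat_mul]
            _ = Real.exp (t*M) := by
                rw [hh]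
                congr 1
                field_simp
        have e6 : (n:ℝ)*(M^2*h^2/2) = M^2*t^2/2/(n:ℝ) := by
          rw [hh]
          field_simp
        calc (n:ℝ)*(1+h*M)^n*(M^2*h^2/2)*‖f‖
            = (1+h*M)^n*((n:ℝ)*(M^2*h^2/2))*‖f‖ := by ring
          _ = (1+h*M)^n*(M^2*t^2/2/(n:ℝ))*‖f‖ := by rw [e6]
          _ ≤ Real.exp (t*M)*(M^2*t^2/2/(n:ℝ))*‖f‖ := by
              apply mul_le_mul_of_nonneg_right _ (norm_nonneg f)
              apply mul_le_mul_of_nonneg_right hexp (by positivity)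
          _ = (Real.exp (t*M) * (M^2*t^2/2) / (n:ℝ)) * ‖f‖ := by ring
  refine ⟨Q, ⟨hQhom, hQsub, hQconst, fun f x h1 h2 => hQ4 f x h1 h2⟩, ?_, ?_⟩
  · exact ne_top_of_le_ne_top ofReal_ne_top (opSemiNorm_le_ofReal hM0 hQM)
  · intro t ht
    rcases eq_or_lt_of_le ht with ht0 | ht0
    · have heq : ∀ n:ℕ, opSemiNorm (euler Q 0 n - T 0) = 0 := by
        intro n
        have h14 : euler Q 0 n = id := by
          unfold euler
          rw [show (fun g : X →ᵇ ℝ => g + ((0:ℝ)/(n:ℝ))•Q g) = id from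
            funext fun g => by simp]
          exact Function.iterate_id n
        refine le_antisymm ?_ zero_le
        refine le_trans (opSemiNorm_le_ofReal (C := 0) le_rfl ?_) (by simp)
        intro f
        rw [Pi.sub_apply, h14, hT0]
        simp
      rw [← ht0]
      have h15 : (fun n:ℕ => opSemiNorm (euler Q 0 n - T 0)) = fun _ => 0 := funext heq
      rw [h15]
      exact tendsto_const_nhds
    · apply tendsto_opSemiNorm_zero (c := fun n:ℕ => Real.exp (t*M) * (M^2*t^2/2) / (n:ℝ))
      · obtain ⟨N, hN⟩ := exists_nat_ge (t/δ)
        filter_upwards [eventually_ge_atTop (max N 1)] with n hn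
        intro f
        have hn1 : 1 ≤ n := le_trans (le_max_right N 1) hn
        have hδn : t/(n:ℝ) ≤ δ := by
          have hNn : (N:ℝ) ≤ n := Nat.cast_le.2 (le_trans (le_max_left N 1) hn)
          have hn0 : (0:ℝ) < n := by
            have : (0:ℕ) < n := hn1
            exact_mod_cast this
          rw [div_le_iff₀ hn0]
          rw [div_le_iff₀ hδpos] at hN
          nlinarith
        have h16 := hmain t ht0 n hn1 hδn f
        simpa using h16
      · exact tendsto_const_div_atTop_nhds_zero_nat (Real.exp (t*M) * (M^2*t^2/2))
      · exact Eventually.of_forall fun n => by positivity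


lemma sg_backward (Q : Op X) (hQrate : IsSublinearRate Q) (hQn : opSemiNorm Q ≠ ⊤)
    (hconv : ∀ t : ℝ, 0 ≤ t →
      Tendsto (fun n => opSemiNorm (euler Q t n - T t)) atTop (𝓝 0)) :
    IsUniformlyContinuousSG T := by
  classical
  set M := (opSemiNorm Q).toReal with hMdef
  have hM0 : 0 ≤ M := ENNReal.toReal_nonneg
  have hQ0 : Q 0 = 0 := by
    have h1 := hQrate.1 0 le_rfl 0
    rwa [zero_smul, zero_smul] at h1
  have hQM : ∀ f, ‖Q f‖ ≤ M*‖f‖ := norm_le_of_opSemiNorm_le hQ0 hQn le_rfl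
  have hstep0 : ∀ (c:ℝ) (m:ℕ), (fun f : X →ᵇ ℝ => f + c•Q f)^[m] 0 = 0 := by
    intro c m
    induction m with
    | zero => rfl
    | succ m ih =>
      rw [Function.iterate_succ_apply', ih]
      simp [hQ0]
  have heuler0 : ∀ (t:ℝ) (n:ℕ), euler Q t n 0 = 0 := by
    intro t n
    unfold euler
    exact hstep0 _ n
  have hkey : ∀ (c:ℝ), 0 ≤ c → ∀ (m:ℕ) (f : X →ᵇ ℝ),
      ‖(fun g : X →ᵇ ℝ => g + c•Q g)^[m] f - f‖ ≤ ((1+c*M)^m - 1)*‖f‖ ∧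
      ‖(fun g : X →ᵇ ℝ => g + c•Q g)^[m] f‖ ≤ (1+c*M)^m*‖f‖ := by
    intro c hc m f
    set E := fun g : X →ᵇ ℝ => g + c•Q g with hE
    induction m with
    | zero => simp
    | succ m ih =>
      obtain ⟨ih1, ih2⟩ := ih
      have hone : (1:ℝ) ≤ 1+c*M := by nlinarith
      have hpw : (0:ℝ) ≤ (1+c*M)^m := by positivity
      have hpow2 : (1+c*M)^(m+1) = (1+c*M)*(1+c*M)^m := by rw [pow_succ]; ring
      have h2 : ‖E (E^[m] f) - E^[m] f‖ ≤ c*M*((1+c*M)^m*‖f‖) := by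
        have e0 : E (E^[m] f) - E^[m] f = c•Q (E^[m] f) := by
          simp only [hE]
          abel
        rw [e0, norm_smul c (Q (E^[m] f)), Real.norm_eq_abs, abs_of_nonneg hc]
        calc c*‖Q (E^[m] f)‖ ≤ c*(M*‖E^[m] f‖) := mul_le_mul_of_nonneg_left (hQM _) hc
          _ ≤ c*(M*((1+c*M)^m*‖f‖)) := by
              refine mul_le_mul_of_nonneg_left ?_ hc
              exact mul_le_mul_of_nonneg_left ih2 hM0
          _ = c*M*((1+c*M)^m*‖f‖) := by ring
      constructor
      · rw [Function.iterate_succ_apply']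
        have e1 : E (E^[m] f) - f = (E (E^[m] f) - E^[m] f) + (E^[m] f - f) := by abel
        rw [e1]
        refine (norm_add_le _ _).trans ?_
        calc ‖E (E^[m] f) - E^[m] f‖ + ‖E^[m] f - f‖
            ≤ c*M*((1+c*M)^m*‖f‖) + ((1+c*M)^m - 1)*‖f‖ := add_le_add h2 ih1
          _ = ((1+c*M)^(m+1) - 1)*‖f‖ := by rw [hpow2]; ring
      · rw [Function.iterate_succ_apply']
        have e2 : E (E^[m] f) = (E (E^[m] f) - E^[m] f) + E^[m] f := by abel
        rw [e2]
        refine (norm_add_le _ _).trans ?_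
        calc ‖E (E^[m] f) - E^[m] f‖ + ‖E^[m] f‖
            ≤ c*M*((1+c*M)^m*‖f‖) + (1+c*M)^m*‖f‖ := add_le_add h2 ih2
          _ = (1+c*M)^(m+1)*‖f‖ := by rw [hpow2]; ring
  have heulerI : ∀ t, 0 ≤ t → ∀ (n:ℕ) (f : X →ᵇ ℝ),
      ‖euler Q t n f - f‖ ≤ (Real.exp (t*M) - 1)*‖f‖ := by
    intro t ht n f
    have hc : 0 ≤ t/(n:ℝ) := by positivity
    have h3 := (hkey (t/(n:ℝ)) hc n f).1
    have h4 : ((1+(t/(n:ℝ))*M)^n - 1) ≤ Real.exp (t*M) - 1 := by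
      rcases Nat.eq_zero_or_pos n with hn0 | hn0
      · subst hn0
        rw [pow_zero]
        have h5 := Real.add_one_le_exp (t*M)
        nlinarith [mul_nonneg ht hM0]
      · have hn0' : (0:ℝ) < n := by exact_mod_cast hn0
        have h5 : 1+(t/(n:ℝ))*M ≤ Real.exp ((t/(n:ℝ))*M) := by
          linarith [Real.add_one_le_exp ((t/(n:ℝ))*M)]
        have h6 : (1+(t/(n:ℝ))*M)^n ≤ Real.exp (t*M) := by
          calc (1+(t/(n:ℝ))*M)^n ≤ (Real.exp ((t/(n:ℝ))*M))^n :=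
                pow_le_pow_left₀ (by positivity) h5 n
            _ = Real.exp ((n:ℝ)*((t/(n:ℝ))*M)) := by rw [← Real.exp_nat_mul]
            _ = Real.exp (t*M) := by congr 1; field_simp
        linarith
    refine le_trans ?_ (mul_le_mul_of_nonneg_right h4 (norm_nonneg f))
    unfold euler
    exact h3
  have hTtI : ∀ t, 0 ≤ t → ∀ f, ‖T t f - f‖ ≤ (Real.exp (t*M) - 1)*‖f‖ := by
    intro t ht f
    have hTt0 : T t 0 = 0 := trans_zero (hT t ht)
    refine _root_.le_of_forall_pos_le_add ?_
    intro ε hε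
    have h7 := (ENNReal.tendsto_nhds_zero.1 (hconv t ht)) (ENNReal.ofReal (ε/(‖f‖+1)))
      (ENNReal.ofReal_pos.2 (by positivity))
    obtain ⟨n, hn⟩ := h7.exists
    have h8 := norm_le_of_opSemiNorm_le (A := euler Q t n - T t) ?s0 ofReal_ne_top hn f
    case s0 =>
      rw [Pi.sub_apply, heuler0, hTt0]
      simp
    rw [ENNReal.toReal_ofReal (by positivity), Pi.sub_apply] at h8
    have h9 := heulerI t ht n f
    have e3 : T t f - f = -(euler Q t n f - T t f) + (euler Q t n f - f) := by abel
    have h10 : ‖T t f - f‖ ≤ ‖euler Q t n f - T t f‖ + ‖euler Q t n f - f‖ := by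
      rw [e3]
      refine (norm_add_le _ _).trans ?_
      rw [norm_neg]
    have h11 : (ε/(‖f‖+1))*‖f‖ ≤ ε := by
      rw [div_mul_eq_mul_div, div_le_iff₀ (by positivity)]
      nlinarith [norm_nonneg f, hε.le]
    linarith
  intro t ht
  have hbound : ∀ s, 0 ≤ s → ∀ f, ‖T s f - T t f‖ ≤ (Real.exp (|s - t| * M) - 1)*‖f‖ := by
    intro s hs f
    rcases le_total t s with hts | hst
    · have e4 : T s = T t ∘ T (s-t) := by
        rw [← hTsg t (s-t) ht (by linarith)]
        congr 1
        ring
      rw [e4, Function.comp_apply]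
      refine (trans_lip (hT t ht) (T (s-t) f) f).trans ?_
      have h13 := hTtI (s-t) (by linarith) f
      rwa [show |s - t| = s-t from abs_of_nonneg (by linarith)]
    · have e5 : T t = T (t-s) ∘ T s := by
        rw [← hTsg (t-s) s (by linarith) hs]
        congr 1
        ring
      have h14 := hTtI (t-s) (by linarith) (T s f)
      have h15 : ‖T s f‖ ≤ ‖f‖ := trans_norm_le (hT s hs) f
      have hexp1 : (0:ℝ) ≤ Real.exp ((t-s)*M) - 1 := by
        have h16 := Real.add_one_le_exp ((t-s)*M)
        nlinarith [mul_nonneg (by linarith : (0:ℝ) ≤ t-s) hM0]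
      calc ‖T s f - T t f‖ = ‖-(T (t-s) (T s f) - T s f)‖ := by
            rw [e5, Function.comp_apply]
            congr 1
            abel
        _ = ‖T (t-s) (T s f) - T s f‖ := norm_neg _
        _ ≤ (Real.exp ((t-s)*M) - 1)*‖T s f‖ := h14
        _ ≤ (Real.exp ((t-s)*M) - 1)*‖f‖ := mul_le_mul_of_nonneg_left h15 hexp1
        _ = (Real.exp (|s - t| * M) - 1)*‖f‖ := by
            rw [show |s - t| = t-s from by rw [abs_sub_comm]; exact abs_of_nonneg (by linarith)]
  apply tendsto_opSemiNorm_zero (c := fun s => Real.exp (|s - t| * M) - 1)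
  · filter_upwards [eventually_mem_nhdsWithin] with s hs
    intro f
    have h17 := hbound s hs f
    simpa using h17
  · have hcont : Continuous fun s : ℝ => Real.exp (|s - t| * M) - 1 :=
      (Real.continuous_exp.comp (((continuous_id.sub continuous_const).abs).mul
        continuous_const)).sub continuous_const
    have h16 : Tendsto (fun s : ℝ => Real.exp (|s - t| * M) - 1) (𝓝[Set.Ici 0] t)
        (𝓝 (Real.exp (|t - t| * M) - 1)) := (hcont.tendsto t).mono_left nhdsWithin_le_nhds
    simpa using h16
  · refine Eventually.of_forall fun s => ?_
    have h18 := Real.add_one_le_exp (|s - t| * M)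
    nlinarith [abs_nonneg (s-t), mul_nonneg (abs_nonneg (s-t)) hM0]

end Main

theorem stmt_0 {X : Type*} [Countable X] [TopologicalSpace X] [DiscreteTopology X]
    (T : ℝ → Op X)
    (hT : ∀ t : ℝ, 0 ≤ t → IsSublinearTransition (T t))
    (hT0 : T 0 = id)
    (hTsg : ∀ s t : ℝ, 0 ≤ s → 0 ≤ t → T (s + t) = T s ∘ T t) :
    IsUniformlyContinuousSG T ↔
      ∃ Q : Op X, IsSublinearRate Q ∧ opSemiNorm Q ≠ ⊤ ∧
        ∀ t : ℝ, 0 ≤ t →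
          Tendsto (fun n => opSemiNorm (euler Q t n - T t)) atTop (nhds 0) := by
  rcases isEmpty_or_nonempty X with hX | hX
  · have hzero : ∀ A : Op X, opSemiNorm A = 0 := by
      intro A
      have hf : ∀ f : BoundedContinuousFunction X ℝ, f = 0 := by
        intro f
        ext x
        exact (hX.false x).elim
      refine le_antisymm ?_ zero_le
      unfold opSemiNorm
      exact iSup₂_le fun f hf' => absurd (hf f) hf'
    constructor
    · intro _
      refine ⟨fun _ => 0, ⟨?_, ?_, ?_, ?_⟩, ?_, ?_⟩
      · intro c hc f; simp
      · intro f g x; simp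
      · intro c; rfl
      · intro f x _ _; simp
      · rw [hzero]; exact ENNReal.zero_ne_top
      · intro t ht
        have he : (fun n:ℕ => opSemiNorm
            (euler (fun _ => (0:BoundedContinuousFunction X ℝ)) t n - T t)) = fun _ => 0 :=
          funext fun n => hzero _
        rw [he]
        exact tendsto_const_nhds
    · intro _ t ht
      have he : (fun s => opSemiNorm (T s - T t)) = fun _ => 0 := funext fun s => hzero _
      rw [he]
      exact tendsto_const_nhds
  · constructor
    · exact sg_forward hT hT0 hTsg
    · rintro ⟨Q, h1, h2, h3⟩
      exact sg_backward hT hT0 hTsg Q h1 h2 h3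
end

section
/- For any sublinear rate operator Q on ℬ, the operator seminorm of Q satisfies ‖Q‖ = 2·sup{[Q(1 − 1_x)](x) : x ∈ X} = sup{[Q(1 − 2·1_x)](x) : x ∈ X}, where the equalities hold in [0,∞]. -/
open Filter Topology BoundedContinuousFunction ENNReal NNReal

set_option linter.unusedSectionVars false

section aux
variable {X : Type*} [TopologicalSpace X] [DiscreteTopology X]

lemma indic_self (x : X) : indic x x = 1 := by
  simp [indic, Set.indicator_apply]

lemma indic_ne {x y : X} (h : y ≠ x) : indic x y = 0 := by
  simp [indic, Set.indicator_apply, h]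

lemma bcf_le_norm (f : BoundedContinuousFunction X ℝ) (y : X) : f y ≤ ‖f‖ :=
  le_trans (le_abs_self _) (f.norm_coe_le_norm y)

lemma bcf_bddAbove (f : BoundedContinuousFunction X ℝ) : BddAbove (Set.range f) :=
  ⟨‖f‖, by rintro _ ⟨y, rfl⟩; exact bcf_le_norm f y⟩

lemma one_eq_const : (1 : BoundedContinuousFunction X ℝ) = BoundedContinuousFunction.const X 1 := rfl

variable (Q : Op X) (hQ : IsSublinearRate Q)

/-- values of `1 - 2•indic x` -/
lemma gfun_self (x : X) : (1 - (2:ℝ) • indic x) x = -1 := by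
  simp [indic_self]; norm_num

lemma gfun_ne {x y : X} (h : y ≠ x) : (1 - (2:ℝ) • indic x) y = 1 := by
  simp [indic_ne h]

include hQ

lemma key_le (f : BoundedContinuousFunction X ℝ) (x : X) :
    Q f x ≤ ‖f‖ * Q (1 - (2:ℝ) • indic x) x := by
  obtain ⟨h1, h2, h3, h4⟩ := hQ
  set g : BoundedContinuousFunction X ℝ := ‖f‖ • (1 - (2:ℝ) • indic x) with hg
  have hQg : Q g x = ‖f‖ * Q (1 - (2:ℝ) • indic x) x := by
    rw [hg, h1 _ (norm_nonneg f)]; simp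
  have hdecomp : g + (f - g) = f := by abel
  have hsub : Q f x ≤ Q g x + Q (f - g) x := by
    have := h2 g (f - g) x
    rwa [hdecomp] at this
  have hnex : Nonempty X := ⟨x⟩
  have hfgx : (f - g) x = f x + ‖f‖ := by
    simp [hg, indic_self]; ring
  have hnn : 0 ≤ (f - g) x := by
    rw [hfgx]
    have := f.norm_coe_le_norm x
    have : -‖f‖ ≤ f x := neg_le_of_abs_le (f.norm_coe_le_norm x)
    linarith
  have hle : ∀ y, (f - g) y ≤ (f - g) x := by
    intro y
    by_cases hy : y = x
    · subst hy; exact le_rfl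
    · have : (f - g) y = f y - ‖f‖ := by simp [hg, indic_ne hy]
      rw [this, hfgx]
      have h1' := bcf_le_norm f y
      have h2' : -‖f‖ ≤ f x := neg_le_of_abs_le (f.norm_coe_le_norm x)
      linarith
  have hsup : (⨆ y, (f - g) y) = (f - g) x := by
    refine le_antisymm (ciSup_le hle) (le_ciSup (bcf_bddAbove _) x)
  have hQ4 := h4 (f - g) x hsup hnn
  calc Q f x ≤ Q g x + Q (f - g) x := hsub
    _ ≤ Q g x + 0 := by linarith
    _ = ‖f‖ * Q (1 - (2:ℝ) • indic x) x := by rw [add_zero, hQg]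

lemma key_nonneg (x : X) : 0 ≤ Q (1 - (2:ℝ) • indic x) x := by
  obtain ⟨h1, h2, h3, h4⟩ := hQ
  have hnex : Nonempty X := ⟨x⟩
  have hsplit : (1 - (2:ℝ) • indic x) + (2:ℝ) • indic x = 1 := by abel
  have h0 : Q 1 x ≤ Q (1 - (2:ℝ) • indic x) x + Q ((2:ℝ) • indic x) x := by
    have := h2 (1 - (2:ℝ) • indic x) ((2:ℝ) • indic x) x
    rwa [hsplit] at this
  have hQ1 : Q (1 : BoundedContinuousFunction X ℝ) = 0 := by rw [one_eq_const]; exact h3 1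
  have hind : Q ((2:ℝ) • indic x) x ≤ 0 := by
    refine h4 _ x ?_ ?_
    · refine le_antisymm (ciSup_le fun y => ?_) (le_ciSup (bcf_bddAbove _) x)
      by_cases hy : y = x
      · subst hy; exact le_rfl
      · simp [indic_ne hy, indic_self]
    · simp [indic_self]
  rw [hQ1] at h0
  simp only [BoundedContinuousFunction.coe_zero, Pi.zero_apply] at h0
  linarith

lemma key_two (x : X) : Q (1 - (2:ℝ) • indic x) x = 2 * Q (1 - indic x) x := by
  obtain ⟨h1, h2, h3, h4⟩ := hQ
  have hQ1 : Q (1 : BoundedContinuousFunction X ℝ) = 0 := by rw [one_eq_const]; exact h3 1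
  have hQm1 : Q (-1 : BoundedContinuousFunction X ℝ) = 0 := by
    have : (-1 : BoundedContinuousFunction X ℝ) = BoundedContinuousFunction.const X (-1) := by
      ext y; simp
    rw [this]; exact h3 (-1)
  have h2smul : (2:ℝ) • (1 - indic x) = (1 - (2:ℝ) • indic x) + 1 := by
    ext y; simp; ring
  have hA : 2 * Q (1 - indic x) x ≤ Q (1 - (2:ℝ) • indic x) x := by
    have := h2 (1 - (2:ℝ) • indic x) 1 x
    rw [← h2smul, h1 2 (by norm_num), hQ1] at this
    simpa using this
  have hB : Q (1 - (2:ℝ) • indic x) x ≤ 2 * Q (1 - indic x) x := by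
    have hsplit : ((2:ℝ) • (1 - indic x)) + (-1) = 1 - (2:ℝ) • indic x := by
      ext y; simp; ring
    have := h2 ((2:ℝ) • (1 - indic x)) (-1) x
    rw [hsplit, h1 2 (by norm_num), hQm1] at this
    simpa using this
  linarith

lemma key_neg (f : BoundedContinuousFunction X ℝ) (x : X) :
    -(‖f‖ * Q (1 - (2:ℝ) • indic x) x) ≤ Q f x := by
  obtain ⟨h1, h2, h3, h4⟩ := hQ
  have h0 : Q (0 : BoundedContinuousFunction X ℝ) = 0 := by
    have : (0 : BoundedContinuousFunction X ℝ) = BoundedContinuousFunction.const X 0 := by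
      ext y; simp
    rw [this]; exact h3 0
  have hsum : Q 0 x ≤ Q f x + Q (-f) x := by
    have := h2 f (-f) x
    rwa [add_neg_cancel] at this
  rw [h0] at hsum
  simp only [BoundedContinuousFunction.coe_zero, Pi.zero_apply] at hsum
  have := key_le Q ⟨h1, h2, h3, h4⟩ (-f) x
  rw [norm_neg] at this
  linarith

end aux

lemma ofReal_norm_eq_coe_nnnorm {E : Type*} [SeminormedAddGroup E] (a : E) :
    ENNReal.ofReal ‖a‖ = (‖a‖₊ : ℝ≥0∞) :=
  ofReal_norm a

theorem stmt_3 {X : Type*} [Countable X] [TopologicalSpace X] [DiscreteTopology X]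
    (Q : Op X) (hQ : IsSublinearRate Q) :
    opSemiNorm Q = 2 * (⨆ x : X, ENNReal.ofReal (Q (1 - indic x) x)) ∧
    opSemiNorm Q = ⨆ x : X, ENNReal.ofReal (Q (1 - (2 : ℝ) • indic x) x) := by
  set M₂ := ⨆ x : X, ENNReal.ofReal (Q (1 - (2:ℝ) • indic x) x) with hM₂
  have hmain : opSemiNorm Q = M₂ := by
    apply le_antisymm
    · rw [opSemiNorm]
      refine iSup₂_le fun f hf => ?_
      have hfn0 : (‖f‖₊ : ℝ≥0∞) ≠ 0 := by
        simpa using (nnnorm_ne_zero_iff.mpr hf)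
      rw [ENNReal.div_le_iff hfn0 ENNReal.coe_ne_top]
      by_cases hM : M₂ = ⊤
      · rw [hM, ENNReal.top_mul hfn0]; exact le_top
      · set m := M₂.toReal with hm
        have hbound : ∀ x : X, Q (1 - (2:ℝ) • indic x) x ≤ m := by
          intro x
          have hle : ENNReal.ofReal (Q (1 - (2:ℝ) • indic x) x) ≤ M₂ :=
            le_iSup (fun x => ENNReal.ofReal (Q (1 - (2:ℝ) • indic x) x)) x
          rw [← ENNReal.ofReal_toReal hM] at hle
          exact (ENNReal.ofReal_le_ofReal_iff ENNReal.toReal_nonneg).mp hle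
        have hmnn : (0:ℝ) ≤ m := ENNReal.toReal_nonneg
        have habs : ∀ y : X, |Q f y| ≤ ‖f‖ * m := by
          intro y
          rw [abs_le]
          refine ⟨?_, le_trans (key_le Q hQ f y)
            (mul_le_mul_of_nonneg_left (hbound y) (norm_nonneg f))⟩
          have h1 := key_neg Q hQ f y
          have h2 : ‖f‖ * Q (1 - (2:ℝ) • indic y) y ≤ ‖f‖ * m :=
            mul_le_mul_of_nonneg_left (hbound y) (norm_nonneg f)
          linarith
        have hnorm : ‖Q f‖ ≤ ‖f‖ * m :=
          (BoundedContinuousFunction.norm_le (mul_nonneg (norm_nonneg f) hmnn)).mpr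
            (fun y => by rw [Real.norm_eq_abs]; exact habs y)
        calc (‖Q f‖₊ : ℝ≥0∞) = ENNReal.ofReal ‖Q f‖ := (ofReal_norm_eq_coe_nnnorm _).symm
          _ ≤ ENNReal.ofReal (‖f‖ * m) := ENNReal.ofReal_le_ofReal hnorm
          _ = ENNReal.ofReal ‖f‖ * ENNReal.ofReal m := ENNReal.ofReal_mul (norm_nonneg f)
          _ = M₂ * (‖f‖₊ : ℝ≥0∞) := by
              rw [ENNReal.ofReal_toReal hM, ofReal_norm_eq_coe_nnnorm, mul_comm]
    · rw [hM₂]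
      refine iSup_le fun x => ?_
      set g := 1 - (2:ℝ) • indic x with hgdef
      have hgx : g x = -1 := gfun_self x
      have hgne : g ≠ 0 := by
        intro h
        rw [h] at hgx
        simp at hgx
      have hgnorm1 : ‖g‖ = 1 := by
        apply le_antisymm
        · refine (BoundedContinuousFunction.norm_le zero_le_one).mpr fun y => ?_
          by_cases hy : y = x
          · subst hy; rw [hgx]; norm_num
          · rw [gfun_ne hy]; norm_num
        · calc (1:ℝ) = ‖g x‖ := by rw [hgx]; norm_num
            _ ≤ ‖g‖ := g.norm_coe_le_norm x
      have hgnnorm : (‖g‖₊ : ℝ≥0∞) = 1 := by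
        rw [← ofReal_norm_eq_coe_nnnorm, hgnorm1]; simp
      have hterm : ENNReal.ofReal (Q g x) ≤ (‖Q g‖₊ : ℝ≥0∞) := by
        rw [← ofReal_norm_eq_coe_nnnorm]
        exact ENNReal.ofReal_le_ofReal
          (le_trans (le_abs_self _) ((Q g).norm_coe_le_norm x))
      calc ENNReal.ofReal (Q g x) ≤ (‖Q g‖₊ : ℝ≥0∞) / (‖g‖₊ : ℝ≥0∞) := by
            rw [hgnnorm, div_one]; exact hterm
        _ ≤ opSemiNorm Q := by
            rw [opSemiNorm]
            exact le_iSup₂ (f := fun (f : BoundedContinuousFunction X ℝ) (_ : f ≠ 0) =>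
              (‖Q f‖₊ : ℝ≥0∞) / (‖f‖₊ : ℝ≥0∞)) g hgne
  have h2eq : M₂ = 2 * ⨆ x : X, ENNReal.ofReal (Q (1 - indic x) x) := by
    rw [hM₂, ENNReal.mul_iSup]
    refine iSup_congr fun x => ?_
    rw [key_two Q hQ x, ENNReal.ofReal_mul (by norm_num)]
    norm_num
  exact ⟨h2eq ▸ hmain, hmain⟩
end

section
/- Let Q be a bounded sublinear rate operator on ℬ and let Δ ≥ 0 be a real number such that Δ·‖Q‖ ≤ 2. Then the operator T := I + ΔQ, defined by Tf = f + Δ·Qf, is a sublinear transition operator. -/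
open Filter Topology BoundedContinuousFunction ENNReal NNReal

section Aux

variable {X : Type*} [TopologicalSpace X]

lemma Q_zero (Q : Op X) (h1 : ∀ (c : ℝ), 0 ≤ c → ∀ f, Q (c • f) = c • Q f) : Q 0 = 0 := by
  have := h1 0 le_rfl 0
  simpa using this

lemma norm_Q_le (Q : Op X) (h1 : ∀ (c : ℝ), 0 ≤ c → ∀ f, Q (c • f) = c • Q f)
    (hQb : opSemiNorm Q ≠ ⊤) (g : BoundedContinuousFunction X ℝ) :
    ‖Q g‖ ≤ (opSemiNorm Q).toReal * ‖g‖ := by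
  rcases eq_or_ne g 0 with rfl | hg
  · simp [Q_zero Q h1]
  · have h2 : (‖Q g‖₊ : ℝ≥0∞) / (‖g‖₊ : ℝ≥0∞) ≤ opSemiNorm Q := by
      refine le_iSup₂_of_le g hg le_rfl
    have hgn : (‖g‖₊ : ℝ≥0∞) ≠ 0 := by simpa using hg
    have h3 : (‖Q g‖₊ : ℝ≥0∞) ≤ opSemiNorm Q * ‖g‖₊ :=
      (ENNReal.div_le_iff_le_mul (Or.inl hgn) (Or.inl ENNReal.coe_ne_top)).mp h2
    have hfin : opSemiNorm Q * (‖g‖₊ : ℝ≥0∞) ≠ ⊤ := ENNReal.mul_ne_top hQb ENNReal.coe_ne_top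
    have := ENNReal.toReal_mono hfin h3
    rwa [ENNReal.toReal_mul, ENNReal.coe_toReal, ENNReal.coe_toReal] at this

end Aux


theorem stmt_5 {X : Type*} [Countable X] [TopologicalSpace X] [DiscreteTopology X]
    (Q : Op X) (hQ : IsSublinearRate Q) (hQb : opSemiNorm Q ≠ ⊤)
    (Δ : ℝ) (hΔ : 0 ≤ Δ) (hΔQ : ENNReal.ofReal Δ * opSemiNorm Q ≤ 2) :
    IsSublinearTransition (fun f => f + Δ • Q f) := by
  classical
  obtain ⟨h1, h2, h3, h4⟩ := hQ
  refine ⟨?_, ?_, ?_⟩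
  · intro c hc f
    simp only
    rw [h1 c hc f, smul_add, smul_comm Δ c]
  · intro f g x
    have key := h2 f g x
    simp only [BoundedContinuousFunction.add_apply, BoundedContinuousFunction.coe_smul,
      Pi.smul_apply, smul_eq_mul]
    have : Δ * Q (f + g) x ≤ Δ * (Q f x + Q g x) := mul_le_mul_of_nonneg_left key hΔ
    nlinarith
  · intro f x
    set N : ℝ := (opSemiNorm Q).toReal with hNdef
    have hN0 : 0 ≤ N := ENNReal.toReal_nonneg
    have hΔN : Δ * N ≤ 2 := by
      have h5 := ENNReal.toReal_mono (by norm_num : (2 : ℝ≥0∞) ≠ ⊤) hΔQ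
      rw [ENNReal.toReal_mul, ENNReal.toReal_ofReal hΔ] at h5
      simpa using h5
    set M : ℝ := ⨆ y, f y with hMdef
    have hbdd : BddAbove (Set.range fun y => f y) := f.isBounded_range.bddAbove
    have hfM : ∀ y, f y ≤ M := fun y => le_ciSup hbdd y
    set t : ℝ := M - f x with htdef
    have ht0 : 0 ≤ t := sub_nonneg.mpr (hfM x)
    have hind : ∀ y, indic x y = if y = x then 1 else 0 := by
      intro y
      simp [indic, Set.indicator_apply, Pi.single_apply]
    -- the auxiliary function h attaining its (nonnegative) supremum 0 at x
    set h : BoundedContinuousFunction X ℝ :=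
      f - BoundedContinuousFunction.const X M + t • indic x with hhdef
    have happ : ∀ y, h y = f y - M + t * (if y = x then 1 else 0) := by
      intro y
      simp [hhdef, hind y]
    have hhx : h x = 0 := by
      rw [happ x]
      simp [htdef]
    have hhy : ∀ y, h y ≤ 0 := by
      intro y
      rw [happ y]
      by_cases hy : y = x
      · subst hy; simp [htdef]
      · simp [hy]
        linarith [hfM y]
    have hsup : (⨆ y, h y) = h x := by
      rw [hhx]
      apply le_antisymm
      · exact Real.iSup_le hhy le_rfl
      · have : BddAbove (Set.range fun y => h y) := h.isBounded_range.bddAbove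
        calc (0:ℝ) = h x := hhx.symm
        _ ≤ ⨆ y, h y := le_ciSup this x
    have hQh : Q h x ≤ 0 := h4 h x hsup (le_of_eq hhx.symm)
    -- the functions u = 1 - 1ₓ and g = 1 - 2·1ₓ
    set u : BoundedContinuousFunction X ℝ :=
      BoundedContinuousFunction.const X 1 - indic x with hudef
    set g : BoundedContinuousFunction X ℝ :=
      BoundedContinuousFunction.const X 1 - (2:ℝ) • indic x with hgdef
    have hgnorm : ‖g‖ ≤ 1 := by
      apply BoundedContinuousFunction.norm_le (by norm_num) |>.mpr
      intro y
      simp [hgdef, hind y]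
      by_cases hy : y = x
      · simp [hy]; norm_num
      · simp [hy]
    have hu : u = (1/2 : ℝ) • (g + BoundedContinuousFunction.const X 1) := by
      ext y
      simp [hudef, hgdef]
      ring
    have hQg : Q g x ≤ N := by
      have := norm_Q_le Q h1 hQb g
      have h6 : Q g x ≤ ‖Q g‖ := by
        calc Q g x ≤ |Q g x| := le_abs_self _
        _ = ‖Q g x‖ := rfl
        _ ≤ ‖Q g‖ := BoundedContinuousFunction.norm_coe_le_norm _ _
      nlinarith [norm_nonneg (Q g)]
    have hQu : Q u x ≤ N / 2 := by
      rw [hu, h1 (1/2) (by norm_num)]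
      have h7 := h2 g (BoundedContinuousFunction.const X 1) x
      rw [h3 1] at h7
      simp only [BoundedContinuousFunction.coe_smul, Pi.smul_apply, smul_eq_mul]
      simp only [BoundedContinuousFunction.coe_zero, Pi.zero_apply] at h7
      nlinarith
    -- decomposition of f
    have hfd : f = h + (t • u + BoundedContinuousFunction.const X (f x)) := by
      ext y
      have := happ y
      simp only [BoundedContinuousFunction.add_apply, BoundedContinuousFunction.coe_smul,
        Pi.smul_apply, smul_eq_mul, BoundedContinuousFunction.const_apply, this,
        hudef, BoundedContinuousFunction.sub_apply, hind y]
      by_cases hy : y = x <;> simp [hy] <;> ring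
    have hQf : Q f x ≤ t * (N / 2) := by
      have h8 : Q f x ≤ Q h x + Q (t • u + BoundedContinuousFunction.const X (f x)) x := by
        nth_rewrite 1 [hfd]
        exact h2 _ _ x
      have h9 := h2 (t • u) (BoundedContinuousFunction.const X (f x)) x
      rw [h3 (f x)] at h9
      rw [h1 t ht0 u] at h9
      simp only [BoundedContinuousFunction.coe_smul, Pi.smul_apply, smul_eq_mul,
        BoundedContinuousFunction.coe_zero, Pi.zero_apply] at h9
      have h10 : t * Q u x ≤ t * (N / 2) := mul_le_mul_of_nonneg_left hQu ht0
      nlinarith [h8, h9, h10, hQh]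
    -- conclude
    simp only [BoundedContinuousFunction.add_apply, BoundedContinuousFunction.coe_smul,
      Pi.smul_apply, smul_eq_mul]
    have h11 : Δ * Q f x ≤ Δ * (t * (N / 2)) := mul_le_mul_of_nonneg_left hQf hΔ
    have h12 : Δ * (t * (N / 2)) ≤ t := by nlinarith
    have h13 : M = f x + t := by rw [htdef]; ring
    linarith
end

section
/- Let Q be a bounded sublinear rate operator on ℬ, and for each t ≥ 0 let e^{tQ} denote the limit in operator seminorm of the sequence ((I + (t/n)Q)^n)_{n∈ℕ}. Then for all s, t ≥ 0, ‖e^{sQ} − e^{tQ}‖ ≤ |s − t|·‖Q‖; consequently the map t ↦ e^{tQ} is Lipschitz continuous with respect to the operator seminorm. -/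
open Filter Topology BoundedContinuousFunction ENNReal NNReal

section AuxLemmas
set_option maxHeartbeats 1000000
variable {X : Type*} [TopologicalSpace X]

lemma nnnorm_apply_le {A B : Op X} {f : BoundedContinuousFunction X ℝ} (hf : f ≠ 0) :
    (‖A f - B f‖₊ : ℝ≥0∞) ≤ opSemiNorm (A - B) * ‖f‖₊ := by
  have h1 : (‖(A - B) f‖₊ : ℝ≥0∞) / (‖f‖₊ : ℝ≥0∞) ≤ opSemiNorm (A - B) :=
    le_iSup₂ (f := fun g (_ : g ≠ 0) => (‖(A - B) g‖₊ : ℝ≥0∞) / (‖g‖₊ : ℝ≥0∞)) f hf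
  have hf0 : (‖f‖₊ : ℝ≥0∞) ≠ 0 := by
    simpa [nnnorm_eq_zero] using hf
  have := (ENNReal.div_le_iff_le_mul (Or.inl hf0) (Or.inl ENNReal.coe_ne_top)).1 h1
  simpa [Pi.sub_apply, mul_comm] using this

lemma norm_apply_le {A : Op X} (hA : opSemiNorm A ≠ ⊤) (hA0 : A 0 = 0)
    (f : BoundedContinuousFunction X ℝ) :
    ‖A f‖ ≤ (opSemiNorm A).toReal * ‖f‖ := by
  rcases eq_or_ne f 0 with rfl | hf
  · simp [hA0]
  · have h := nnnorm_apply_le (A := A) (B := 0) hf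
    simp only [Pi.sub_apply, Pi.zero_apply, sub_zero] at h
    have := ENNReal.toReal_mono (by exact ENNReal.mul_ne_top hA ENNReal.coe_ne_top) h
    simpa using this

variable {Q : Op X} (hQ : IsSublinearRate Q) (hQb : opSemiNorm Q ≠ ⊤)

include hQ

lemma hQzero : Q 0 = 0 := by
  have := hQ.1 0 le_rfl 0
  simpa using this

lemma transInv (f : BoundedContinuousFunction X ℝ) (c : ℝ) (x : X) :
    Q (f + BoundedContinuousFunction.const X c) x = Q f x := by
  have h1 := hQ.2.1 f (BoundedContinuousFunction.const X c) x
  have h2 := hQ.2.1 (f + BoundedContinuousFunction.const X c)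
    (BoundedContinuousFunction.const X (-c)) x
  have he : f + BoundedContinuousFunction.const X c
      + BoundedContinuousFunction.const X (-c) = f := by
    ext y; simp
  rw [he, hQ.2.2.1 (-c)] at h2
  rw [hQ.2.2.1 c] at h1
  simp only [BoundedContinuousFunction.coe_zero, Pi.zero_apply, add_zero] at h1 h2
  linarith

include hQb

lemma lemA [DiscreteTopology X] [Nonempty X] (f : BoundedContinuousFunction X ℝ) (x : X) :
    Q f x ≤ (opSemiNorm Q).toReal * ((⨆ y, f y) - f x) := by
  classical
  set C := (opSemiNorm Q).toReal with hC
  have hC0 : 0 ≤ C := ENNReal.toReal_nonneg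
  have key : ∀ ε : ℝ, 0 < ε → Q f x ≤ C * ((⨆ y, f y) - f x) + C * ε := by
    intro ε hε
    set f' : BoundedContinuousFunction X ℝ :=
      f + BoundedContinuousFunction.const X (-(f x)) with hf'
    have hf'app : ∀ y, f' y = f y - f x := by
      intro y; simp [hf', sub_eq_add_neg]
    have hbdd : BddAbove (Set.range ⇑f') :=
      ⟨‖f'‖, by rintro _ ⟨y, rfl⟩; exact f'.apply_le_norm y⟩
    set s' := ⨆ y, f' y with hs'
    have hs'0 : 0 ≤ s' := by
      have := le_ciSup hbdd x
      rw [hf'app x, sub_self] at this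
      exact this
    set g : BoundedContinuousFunction X ℝ := f' + (s' + ε) • indic x with hg
    have hind : ∀ y, indic x y = if y = x then 1 else 0 := by
      intro y
      simp [indic, BoundedContinuousFunction.coe_ofNormedAddCommGroup, Set.indicator_apply, Pi.single_apply]
    have hgapp : ∀ y, g y = f' y + (s' + ε) * (if y = x then 1 else 0) := by
      intro y; simp [hg, hind y]
    have hgx : g x = s' + ε := by
      rw [hgapp x, hf'app x]; simp
    have hsup : (⨆ y, g y) = g x := by
      apply le_antisymm
      · apply ciSup_le
        intro y
        by_cases hy : y = x
        · subst hy; exact le_rfl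
        · rw [hgapp y, if_neg hy, hgx]
          have : f' y ≤ s' := le_ciSup hbdd y
          linarith
      · exact le_ciSup ⟨‖g‖, by rintro _ ⟨y, rfl⟩; exact g.apply_le_norm y⟩ x
    have hQg : Q g x ≤ 0 := hQ.2.2.2 g x hsup (by rw [hgx]; linarith)
    have hsub : Q f' x ≤ Q g x + Q (f' - g) x := by
      have := hQ.2.1 g (f' - g) x
      rwa [add_sub_cancel] at this
    have hfg : f' - g = -((s' + ε) • indic x) := by
      rw [hg]; abel
    have hnorm : ‖f' - g‖ ≤ s' + ε := by
      apply (BoundedContinuousFunction.norm_le (by linarith)).2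
      intro y
      have : (f' - g) y = -((s' + ε) * (if y = x then 1 else 0)) := by
        rw [hfg]
        simp [hind y]
      rw [this, norm_neg, Real.norm_eq_abs]
      by_cases hy : y = x <;> simp [hy, abs_of_nonneg, abs_of_pos] <;> linarith [abs_of_nonneg (show (0:ℝ) ≤ s' + ε by linarith)]
    have hQfg : Q (f' - g) x ≤ C * (s' + ε) := by
      calc Q (f' - g) x ≤ ‖Q (f' - g)‖ := (Q (f' - g)).apply_le_norm x
        _ ≤ C * ‖f' - g‖ := norm_apply_le hQb (hQzero hQ) _
        _ ≤ C * (s' + ε) := mul_le_mul_of_nonneg_left hnorm hC0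
    have hQf' : Q f' x = Q f x := transInv hQ f (-(f x)) x
    have hbf : BddAbove (Set.range ⇑f) :=
      ⟨‖f‖, by rintro _ ⟨y, rfl⟩; exact f.apply_le_norm y⟩
    have hs'le : s' ≤ (⨆ y, f y) - f x := by
      apply ciSup_le
      intro y
      rw [hf'app y]
      have : f y ≤ ⨆ y, f y := le_ciSup hbf y
      linarith
    have hmul : C * s' ≤ C * ((⨆ y, f y) - f x) := mul_le_mul_of_nonneg_left hs'le hC0
    calc Q f x = Q f' x := hQf'.symm
      _ ≤ Q g x + Q (f' - g) x := hsub
      _ ≤ 0 + C * (s' + ε) := by apply add_le_add hQg hQfg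
      _ = C * s' + C * ε := by ring
      _ ≤ C * ((⨆ y, f y) - f x) + C * ε := by linarith
  apply _root_.le_of_forall_pos_le_add
  intro δ hδ
  have hε : 0 < δ / (C + 1) := by positivity
  have := key (δ / (C + 1)) hε
  have hle : C * (δ / (C + 1)) ≤ δ := by
    rw [div_eq_mul_inv, ← mul_assoc]
    rw [mul_inv_le_iff₀ (by linarith)]
    nlinarith
  linarith


variable [DiscreteTopology X] [Nonempty X]

lemma step_one_sided {a : ℝ} (ha : 0 ≤ a) (haC : a * (opSemiNorm Q).toReal ≤ 1)
    (f g : BoundedContinuousFunction X ℝ) (x : X) :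
    (f x + a * Q f x) - (g x + a * Q g x) ≤ ‖f - g‖ := by
  set C := (opSemiNorm Q).toReal with hC
  have hC0 : 0 ≤ C := ENNReal.toReal_nonneg
  set h : BoundedContinuousFunction X ℝ := f - g with hh
  have hfg : h + g = f := by rw [hh]; abel
  have hQd : Q f x - Q g x ≤ Q h x := by
    have := hQ.2.1 h g x
    rw [hfg] at this
    linarith
  have hA := lemA hQ hQb h x
  set S := ⨆ y, h y with hS
  have hhx : h x ≤ ‖h‖ := h.apply_le_norm x
  have hhx' : -‖h‖ ≤ h x := h.neg_norm_le_apply x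
  have hsup : S ≤ ‖h‖ := ciSup_le fun y => h.apply_le_norm y
  have hxval : h x = f x - g x := by simp [hh]
  have e1 : a * (Q f x - Q g x) ≤ a * (C * (S - h x)) :=
    mul_le_mul_of_nonneg_left (hQd.trans hA) ha
  have e2 : h x + a * (C * (S - h x)) = (1 - a * C) * h x + (a * C) * S := by ring
  have e3 : (1 - a * C) * h x ≤ (1 - a * C) * ‖h‖ :=
    mul_le_mul_of_nonneg_left hhx (by linarith)
  have e4 : (a * C) * S ≤ (a * C) * ‖h‖ :=
    mul_le_mul_of_nonneg_left hsup (mul_nonneg ha hC0)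
  nlinarith
lemma step_contract {a : ℝ} (ha : 0 ≤ a) (haC : a * (opSemiNorm Q).toReal ≤ 1)
    (f g : BoundedContinuousFunction X ℝ) :
    ‖(f + a • Q f) - (g + a • Q g)‖ ≤ ‖f - g‖ := by
  apply (BoundedContinuousFunction.norm_le (norm_nonneg _)).2
  intro x
  have hval : ((f + a • Q f) - (g + a • Q g)) x
      = (f x + a * Q f x) - (g x + a * Q g x) := by simp
  rw [hval, Real.norm_eq_abs, abs_le]
  constructor
  · have := step_one_sided hQ hQb ha haC g f x
    rw [norm_sub_rev] at this
    linarith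
  · exact step_one_sided hQ hQb ha haC f g x

lemma step_norm {a : ℝ} (ha : 0 ≤ a) (haC : a * (opSemiNorm Q).toReal ≤ 1)
    (f : BoundedContinuousFunction X ℝ) :
    ‖f + a • Q f‖ ≤ ‖f‖ := by
  have := step_contract hQ hQb ha haC f 0
  simpa [hQzero hQ] using this

lemma iter_norm {a : ℝ} (ha : 0 ≤ a) (haC : a * (opSemiNorm Q).toReal ≤ 1)
    (f : BoundedContinuousFunction X ℝ) (k : ℕ) :
    ‖(fun f => f + a • Q f)^[k] f‖ ≤ ‖f‖ := by
  induction k with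
  | zero => simp
  | succ k ih =>
    rw [Function.iterate_succ_apply']
    exact (step_norm hQ hQb ha haC _).trans ih

lemma iter_diff {a b : ℝ} (ha : 0 ≤ a) (hb : 0 ≤ b)
    (haC : a * (opSemiNorm Q).toReal ≤ 1) (hbC : b * (opSemiNorm Q).toReal ≤ 1)
    (f : BoundedContinuousFunction X ℝ) (k : ℕ) :
    ‖(fun f => f + a • Q f)^[k] f - (fun f => f + b • Q f)^[k] f‖
      ≤ k * (|a - b| * ((opSemiNorm Q).toReal * ‖f‖)) := by
  set C := (opSemiNorm Q).toReal with hC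
  have hC0 : 0 ≤ C := ENNReal.toReal_nonneg
  induction k with
  | zero => simp
  | succ k ih =>
    rw [Function.iterate_succ_apply', Function.iterate_succ_apply']
    set u := (fun f => f + a • Q f)^[k] f with hu
    set v := (fun f => f + b • Q f)^[k] f with hv
    have tri : ‖(u + a • Q u) - (v + b • Q v)‖
        ≤ ‖(u + a • Q u) - (v + a • Q v)‖ + ‖(v + a • Q v) - (v + b • Q v)‖ := by
      have := dist_triangle (u + a • Q u) (v + a • Q v) (v + b • Q v)
      simpa [dist_eq_norm] using this
    have h1 : ‖(u + a • Q u) - (v + a • Q v)‖ ≤ ‖u - v‖ := step_contract hQ hQb ha haC u v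
    have h2eq : (v + a • Q v) - (v + b • Q v) = (a - b) • Q v := by
      ext y
      simp [sub_mul]
    have h2 : ‖(v + a • Q v) - (v + b • Q v)‖ ≤ |a - b| * ‖Q v‖ := by
      rw [h2eq]
      apply (BoundedContinuousFunction.norm_le
        (mul_nonneg (abs_nonneg _) (norm_nonneg _))).2
      intro y
      have : ((a - b) • Q v) y = (a - b) * Q v y := by simp
      rw [this, Real.norm_eq_abs, abs_mul]
      exact mul_le_mul_of_nonneg_left
        (abs_le.2 ⟨(Q v).neg_norm_le_apply y, (Q v).apply_le_norm y⟩) (abs_nonneg _)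
    have h3 : ‖Q v‖ ≤ C * ‖f‖ := by
      calc ‖Q v‖ ≤ C * ‖v‖ := norm_apply_le hQb (hQzero hQ) v
        _ ≤ C * ‖f‖ := mul_le_mul_of_nonneg_left (iter_norm hQ hQb hb hbC f k) hC0
    have h4 : |a - b| * ‖Q v‖ ≤ |a - b| * (C * ‖f‖) :=
      mul_le_mul_of_nonneg_left h3 (abs_nonneg _)
    have : (↑(k + 1) : ℝ) = (k : ℝ) + 1 := by push_cast; ring
    rw [this]
    nlinarith [abs_nonneg (a - b), norm_nonneg f]


lemma euler_diff {s t : ℝ} (hs : 0 ≤ s) (ht : 0 ≤ t) {n : ℕ} (hn1 : 1 ≤ n)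
    (hsn : s * (opSemiNorm Q).toReal ≤ n) (htn : t * (opSemiNorm Q).toReal ≤ n)
    (f : BoundedContinuousFunction X ℝ) :
    ‖euler Q s n f - euler Q t n f‖ ≤ |s - t| * ((opSemiNorm Q).toReal * ‖f‖) := by
  set C := (opSemiNorm Q).toReal with hC
  have hn0 : (0:ℝ) < n := by exact_mod_cast Nat.lt_of_lt_of_le Nat.zero_lt_one hn1
  have ha : 0 ≤ s / n := div_nonneg hs hn0.le
  have hb : 0 ≤ t / n := div_nonneg ht hn0.le
  have haC : (s / n) * C ≤ 1 := by
    rw [div_mul_eq_mul_div, div_le_one hn0]; exact hsn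
  have hbC : (t / n) * C ≤ 1 := by
    rw [div_mul_eq_mul_div, div_le_one hn0]; exact htn
  have key := iter_diff hQ hQb ha hb haC hbC f n
  have habs : |s / (n:ℝ) - t / n| = |s - t| / n := by
    rw [div_sub_div_same, abs_div, abs_of_pos hn0]
  rw [habs] at key
  have heq : (n:ℝ) * (|s - t| / n * (C * ‖f‖)) = |s - t| * (C * ‖f‖) := by
    field_simp
  rw [heq] at key
  simpa [euler] using key


end AuxLemmas

theorem stmt_10 {X : Type*} [Countable X] [TopologicalSpace X] [DiscreteTopology X]
    (Q : Op X) (hQ : IsSublinearRate Q) (hQb : opSemiNorm Q ≠ ⊤)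
    (E : ℝ → Op X)
    (hE : ∀ t : ℝ, 0 ≤ t → Tendsto (fun n => opDist (euler Q t n) (E t)) atTop (nhds 0)) :
    ∀ s t : ℝ, 0 ≤ s → 0 ≤ t →
      opSemiNorm (E s - E t) ≤ ENNReal.ofReal |s - t| * opSemiNorm Q := by
  intro s t hs ht
  rcases isEmpty_or_nonempty X with hX | hX
  · rw [opSemiNorm]
    apply iSup₂_le
    intro f hf
    exact absurd (by ext y; exact hX.elim y) hf
  · set C := (opSemiNorm Q).toReal with hCdef
    have hC0 : 0 ≤ C := ENNReal.toReal_nonneg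
    rw [opSemiNorm]
    apply iSup₂_le
    intro f hf
    have hf0 : (‖f‖₊ : ℝ≥0∞) ≠ 0 := by simpa [nnnorm_eq_zero] using hf
    rw [ENNReal.div_le_iff_le_mul (Or.inl hf0) (Or.inl ENNReal.coe_ne_top)]
    simp only [Pi.sub_apply]
    -- choose N
    set N : ℕ := max 1 ⌈(max s t) * C⌉₊ with hN
    have key : (‖E s f - E t f‖₊ : ℝ≥0∞) ≤ ENNReal.ofReal (|s - t| * (C * ‖f‖)) := by
      have hbound : ∀ᶠ n in atTop, (‖E s f - E t f‖₊ : ℝ≥0∞)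
          ≤ opDist (euler Q s n) (E s) * ‖f‖₊
            + (ENNReal.ofReal (|s - t| * (C * ‖f‖)) + opDist (euler Q t n) (E t) * ‖f‖₊) := by
        filter_upwards [eventually_ge_atTop N] with n hn
        have hn1 : 1 ≤ n := le_trans (le_max_left _ _) hn
        have hnC : (max s t) * C ≤ n := by
          calc (max s t) * C ≤ (⌈(max s t) * C⌉₊ : ℝ) := Nat.le_ceil _
            _ ≤ (N : ℝ) := by exact_mod_cast le_max_right 1 _
            _ ≤ (n : ℝ) := by exact_mod_cast hn
        have hsn : s * C ≤ n :=
          le_trans (mul_le_mul_of_nonneg_right (le_max_left s t) hC0) hnC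
        have htn : t * C ≤ n :=
          le_trans (mul_le_mul_of_nonneg_right (le_max_right s t) hC0) hnC
        have tri : (‖E s f - E t f‖₊ : ℝ≥0∞)
            ≤ (‖E s f - euler Q s n f‖₊ : ℝ≥0∞)
              + ((‖euler Q s n f - euler Q t n f‖₊ : ℝ≥0∞)
                + (‖euler Q t n f - E t f‖₊ : ℝ≥0∞)) := by
          have hsplit : E s f - E t f = (E s f - euler Q s n f)
              + ((euler Q s n f - euler Q t n f) + (euler Q t n f - E t f)) := by abel
          rw [hsplit]
          exact_mod_cast (nnnorm_add_le _ _).trans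
            (add_le_add le_rfl (nnnorm_add_le _ _))
        have term1 : (‖E s f - euler Q s n f‖₊ : ℝ≥0∞)
            ≤ opDist (euler Q s n) (E s) * ‖f‖₊ := by
          have h := nnnorm_apply_le (A := euler Q s n) (B := E s) hf
          rw [show ‖euler Q s n f - E s f‖₊ = ‖E s f - euler Q s n f‖₊ from by rw [← neg_sub, nnnorm_neg]] at h
          refine h.trans (mul_le_mul_left ?_ _)
          rw [opDist]; exact le_add_self
        have term3 : (‖euler Q t n f - E t f‖₊ : ℝ≥0∞)
            ≤ opDist (euler Q t n) (E t) * ‖f‖₊ := by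
          have h := nnnorm_apply_le (A := euler Q t n) (B := E t) hf
          refine h.trans (mul_le_mul_left ?_ _)
          rw [opDist]; exact le_add_self
        have term2 : (‖euler Q s n f - euler Q t n f‖₊ : ℝ≥0∞)
            ≤ ENNReal.ofReal (|s - t| * (C * ‖f‖)) := by
          rw [← ENNReal.ofReal_coe_nnreal, coe_nnnorm]
          exact ENNReal.ofReal_le_ofReal (euler_diff hQ hQb hs ht hn1 hsn htn f)
        exact tri.trans (add_le_add term1 (add_le_add term2 term3))
      have h1 : Tendsto (fun n => opDist (euler Q s n) (E s) * (‖f‖₊ : ℝ≥0∞)) atTop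
          (nhds (0 * ‖f‖₊)) :=
        ENNReal.Tendsto.mul_const (hE s hs) (Or.inr ENNReal.coe_ne_top)
      have h3 : Tendsto (fun n => opDist (euler Q t n) (E t) * (‖f‖₊ : ℝ≥0∞)) atTop
          (nhds (0 * ‖f‖₊)) :=
        ENNReal.Tendsto.mul_const (hE t ht) (Or.inr ENNReal.coe_ne_top)
      have hcomb := h1.add ((tendsto_const_nhds
        (x := ENNReal.ofReal (|s - t| * (C * ‖f‖))) (f := atTop)).add h3)
      have := ge_of_tendsto hcomb hbound
      simpa using this
    refine key.trans ?_
    have heq : ENNReal.ofReal (|s - t| * (C * ‖f‖))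
        = ENNReal.ofReal |s - t| * opSemiNorm Q * ‖f‖₊ := by
      rw [ENNReal.ofReal_mul (abs_nonneg _), ENNReal.ofReal_mul hC0,
        ENNReal.ofReal_toReal hQb, ← coe_nnnorm f, ENNReal.ofReal_coe_nnreal, mul_assoc]
    exact heq.le
end
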